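/- arXiv:1407.1369 — 11 statements merged into one kernel-verified Lean document; each statement's English description precedes it below -/
import Mathlib

section
/- For every n ≥ 1, ∑_{k=1}^{n} R_k² = [4·R_n·R_{n+1} − 4·R_0·R_1 − (R_{n+1} − R_{n-1})² + (R_{-2} + R_0)²]/4. -/
/-- sum of squares of the first `n` terms of the generalized
tribonacci sequence. -/
theorem sum_sq_generalized_tribonacci
    (a b c : ℤ) (ha : 0 < a) (hb : 0 < b) (hc : 0 < c)
    (R : ℤ → ℝ) (hR0 : R 0 = (a : ℝ)) (hR1 : R 1 = (b : ℝ)) (hR2 : R 2 = (c : ℝ))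
    (hrec : ∀ m : ℤ, R m = R (m - 1) + R (m - 2) + R (m - 3))
    (n : ℕ) (hn : 1 ≤ n) :
    ∑ k ∈ Finset.Icc (1 : ℤ) (n : ℤ), R k ^ 2 =
      (4 * R (n : ℤ) * R ((n : ℤ) + 1) - 4 * R 0 * R 1
        - (R ((n : ℤ) + 1) - R ((n : ℤ) - 1)) ^ 2 + (R (-2) + R 0) ^ 2) / 4 := by
  induction n, hn using Nat.le_induction with
  | base =>
    have h1 := hrec 1
    have h2 := hrec 2
    norm_num at h1 h2 ⊢
    have hm2 : R (-2) = 2 * R 1 - R 2 := by linarith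
    rw [hm2]; ring
  | succ n hn ih =>
    have hins : Finset.Icc (1 : ℤ) ((n : ℤ) + 1)
        = insert ((n : ℤ) + 1) (Finset.Icc (1 : ℤ) (n : ℤ)) := by
      ext x
      simp only [Finset.mem_Icc, Finset.mem_insert]
      omega
    have hnot : ((n : ℤ) + 1) ∉ Finset.Icc (1 : ℤ) (n : ℤ) := by simp
    have h2 := hrec ((n : ℤ) + 2)
    push_cast
    rw [hins, Finset.sum_insert hnot, ih]
    have e1 : ((n : ℤ) + 2 - 1) = (n : ℤ) + 1 := by ring
    have e2 : ((n : ℤ) + 2 - 2) = (n : ℤ) := by ring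
    have e3 : ((n : ℤ) + 2 - 3) = (n : ℤ) - 1 := by ring
    rw [e1, e2, e3] at h2
    have e4 : ((n : ℤ) + 1 + 1) = (n : ℤ) + 2 := by ring
    have e5 : ((n : ℤ) + 1 - 1) = (n : ℤ) := by ring
    rw [e4, e5]
    linear_combination ((R ((n:ℤ)+2) - 3*R ((n:ℤ)+1) - R (n:ℤ) + R ((n:ℤ)-1))/4) * h2
end

section
/- For every n ≥ 1, ∑_{k=1}^{n} R_k·R_{k-2} = [(R_{n+1} − R_{n-1})² − (R_{-2} + R_0)²]/4. -/
/-- sum of the products `R_k R_{k-2}` for the generalized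
tribonacci sequence. -/
theorem sum_mul_shift_generalized_tribonacci
    (a b c : ℤ) (ha : 0 < a) (hb : 0 < b) (hc : 0 < c)
    (R : ℤ → ℝ) (hR0 : R 0 = (a : ℝ)) (hR1 : R 1 = (b : ℝ)) (hR2 : R 2 = (c : ℝ))
    (hrec : ∀ m : ℤ, R m = R (m - 1) + R (m - 2) + R (m - 3))
    (n : ℕ) (hn : 1 ≤ n) :
    ∑ k ∈ Finset.Icc (1 : ℤ) (n : ℤ), R k * R (k - 2) =
      ((R ((n : ℤ) + 1) - R ((n : ℤ) - 1)) ^ 2 - (R (-2) + R 0) ^ 2) / 4 := by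
  induction n with
  | zero => omega
  | succ m ih =>
    rcases Nat.lt_or_ge m 1 with hm | hm
    · -- base case: m = 0, n = 1
      interval_cases m
      have h1 := hrec 1
      have h2 := hrec 2
      norm_num at h1 h2 ⊢
      linear_combination (-(R 0 + R (-2) + R 1 - R (-1))/4) * h1 +
        (-(R 2 - R 0 + R 1 + R (-1))/4) * h2
    · have ih' := ih hm
      have hcast : ((m : ℤ) + 1) = ((m + 1 : ℕ) : ℤ) := by push_cast; ring
      have hsum : ∑ k ∈ Finset.Icc (1 : ℤ) ((m : ℤ) + 1), R k * R (k - 2)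
          = (∑ k ∈ Finset.Icc (1 : ℤ) (m : ℤ), R k * R (k - 2))
            + R ((m : ℤ) + 1) * R ((m : ℤ) + 1 - 2) := by
        have hins : Finset.Icc (1 : ℤ) ((m : ℤ) + 1)
            = insert ((m : ℤ) + 1) (Finset.Icc (1 : ℤ) (m : ℤ)) := by
          ext x
          simp only [Finset.mem_Icc, Finset.mem_insert]
          omega
        rw [hins, Finset.sum_insert (by simp)]
        ring
      have hr := hrec ((m : ℤ) + 2)
      have e1 : ((m : ℤ) + 2 - 1) = (m : ℤ) + 1 := by ring
      have e2 : ((m : ℤ) + 2 - 2) = (m : ℤ) := by ring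
      have e3 : ((m : ℤ) + 2 - 3) = (m : ℤ) - 1 := by ring
      rw [e1, e2, e3] at hr
      push_cast
      rw [hsum, ih']
      have e4 : ((m : ℤ) + 1 - 2) = (m : ℤ) - 1 := by ring
      have e5 : ((m : ℤ) + 1 + 1) = (m : ℤ) + 2 := by ring
      rw [e4, e5, hr]
      ring
end

section
/- For every n ≥ 1, R_n·R_{n+1} = ∑_{k=1}^{n} R_k² + ∑_{k=1}^{n} R_k·R_{k-2} + R_0·R_1. -/
lemma sum_Icc_top_int (f : ℤ → ℝ) (n : ℤ) (h : 0 ≤ n) :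
    ∑ k ∈ Finset.Icc (1 : ℤ) (n + 1), f k
      = ∑ k ∈ Finset.Icc (1 : ℤ) n, f k + f (n + 1) := by
  rw [show Finset.Icc (1 : ℤ) (n + 1) = insert (n + 1) (Finset.Icc 1 n) by
      ext x; simp only [Finset.mem_insert, Finset.mem_Icc]; omega,
    Finset.sum_insert (by simp)]
  ring

/-- the product `R_n R_{n+1}` of two consecutive generalized
tribonacci numbers in terms of sums of squares and shifted products. -/
theorem mul_consecutive_generalized_tribonacci
    (a b c : ℤ) (ha : 0 < a) (hb : 0 < b) (hc : 0 < c)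
    (R : ℤ → ℝ) (hR0 : R 0 = (a : ℝ)) (hR1 : R 1 = (b : ℝ)) (hR2 : R 2 = (c : ℝ))
    (hrec : ∀ m : ℤ, R m = R (m - 1) + R (m - 2) + R (m - 3))
    (n : ℕ) (hn : 1 ≤ n) :
    R (n : ℤ) * R ((n : ℤ) + 1) =
      ∑ k ∈ Finset.Icc (1 : ℤ) (n : ℤ), R k ^ 2
        + ∑ k ∈ Finset.Icc (1 : ℤ) (n : ℤ), R k * R (k - 2) + R 0 * R 1 := by
  induction n, hn using Nat.le_induction with
  | base =>
    have h2 := hrec 2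
    norm_num at h2 ⊢
    rw [h2]; ring
  | succ n hn ih =>
    have hstep := hrec ((n : ℤ) + 2)
    push_cast
    rw [sum_Icc_top_int _ _ (Int.ofNat_nonneg n), sum_Icc_top_int _ _ (Int.ofNat_nonneg n)]
    have h1 : ((n : ℤ)) + 2 - 1 = (n : ℤ) + 1 := by ring
    have h2 : ((n : ℤ)) + 2 - 2 = (n : ℤ) := by ring
    have h3 : ((n : ℤ)) + 2 - 3 = (n : ℤ) - 1 := by ring
    rw [h1, h2, h3] at hstep
    have h4 : ((n : ℤ)) + 1 - 2 = (n : ℤ) - 1 := by ring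
    rw [h4]
    have h5 : ((n : ℤ)) + 1 + 1 = (n : ℤ) + 2 := by ring
    rw [h5]
    rw [hstep]
    linear_combination ih
end

section
/- Let n ≥ 1, let r be a complex number with |r| ≥ 1, and let A = A_r(R_0, R_1, …, R_{n-1}) be the r-circulant matrix on the first n terms of the generalized tribonacci sequence. Then ‖A‖₂ ≥ √(∑_{k=0}^{n-1} R_k²). -/
/-- lower bound for the spectral norm of an `r`-circulant matrix
on the generalized tribonacci sequence, when `|r| ≥ 1`. -/
theorem rcirculant_tribonacci_specNorm_lower
    (a b c : ℤ) (ha : 0 < a) (hb : 0 < b) (hc : 0 < c)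
    (R : ℤ → ℝ) (hR0 : R 0 = (a : ℝ)) (hR1 : R 1 = (b : ℝ)) (hR2 : R 2 = (c : ℝ))
    (hrec : ∀ m : ℤ, R m = R (m - 1) + R (m - 2) + R (m - 3))
    (n : ℕ) (hn : 1 ≤ n) (r : ℂ) (hr : 1 ≤ ‖r‖)
    (A : Matrix (Fin n) (Fin n) ℂ)
    (hA : ∀ i j : Fin n, A i j =
      if (i : ℕ) ≤ (j : ℕ) then ((R ((j : ℤ) - (i : ℤ)) : ℝ) : ℂ)
      else r * ((R ((n : ℤ) + (j : ℤ) - (i : ℤ)) : ℝ) : ℂ)) :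
    Real.sqrt (∑ k ∈ Finset.range n, R (k : ℤ) ^ 2) ≤
      ‖Matrix.toEuclideanCLM (𝕜 := ℂ) A‖ := by
  set i0 : Fin n := ⟨0, hn⟩ with hi0
  set v : EuclideanSpace ℂ (Fin n) := EuclideanSpace.single i0 (1 : ℂ) with hv
  have hvnorm : ‖v‖ = 1 := by
    simp [hv, EuclideanSpace.norm_single]
  -- compute the image of the basis vector
  have himg : Matrix.toEuclideanCLM (𝕜 := ℂ) A v
      = (WithLp.equiv 2 (Fin n → ℂ)).symm (fun i => A i i0 * 1) := by
    rw [hv]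
    show Matrix.toEuclideanCLM (𝕜 := ℂ) A
        ((WithLp.equiv 2 (Fin n → ℂ)).symm (Pi.single i0 (1 : ℂ))) = _
    simp only [WithLp.equiv_symm_apply, Matrix.toEuclideanCLM_toLp]
    congr 1
    ext i
    simp [Matrix.toLin'_apply, Matrix.mulVec_single]
  -- norm of the image
  have hnormimg : ‖Matrix.toEuclideanCLM (𝕜 := ℂ) A v‖
      = Real.sqrt (∑ i : Fin n, ‖A i i0‖ ^ 2) := by
    rw [himg, EuclideanSpace.norm_eq]
    congr 1
    refine Finset.sum_congr rfl fun i _ => ?_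
    simp
  -- the involution on Fin n
  have htau : ∀ i : Fin n, (i : ℕ) ≠ 0 → n - (i : ℕ) < n := by
    intro i hi
    omega
  let τ : Fin n → Fin n := fun i =>
    if h : (i : ℕ) = 0 then i0 else ⟨n - (i : ℕ), htau i h⟩
  have hτinv : Function.Involutive τ := by
    intro i
    by_cases h : (i : ℕ) = 0
    · simp [τ, h, hi0]
      ext; simp [hi0]; omega
    · have h2 : (n - (i : ℕ)) ≠ 0 := by have := i.isLt; omega
      simp only [τ, dif_pos, dif_neg h]
      rw [dif_neg]
      · ext; simp; have := i.isLt; omega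
      · exact h2
  -- key sum inequality
  have hsum : (∑ k ∈ Finset.range n, R (k : ℤ) ^ 2) ≤ ∑ i : Fin n, ‖A i i0‖ ^ 2 := by
    have h1 : (∑ k ∈ Finset.range n, R (k : ℤ) ^ 2)
        = ∑ i : Fin n, R ((i : ℕ) : ℤ) ^ 2 := by
      rw [Finset.sum_range fun k => R (k : ℤ) ^ 2]
    rw [h1, ← Equiv.sum_comp (hτinv.toPerm) (fun i : Fin n => R ((i : ℕ) : ℤ) ^ 2)]
    simp only [Function.Involutive.coe_toPerm]
    refine Finset.sum_le_sum fun i _ => ?_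
    by_cases h : (i : ℕ) = 0
    · have hii0 : i = i0 := by ext; simp [hi0, h]
      simp only [τ, dif_pos h, hii0, hi0]
      rw [hA]
      simp [Complex.norm_real, sq_abs]
    · have hval : A i i0 = r * ((R ((n : ℤ) + (i0 : ℤ) - (i : ℤ)) : ℝ) : ℂ) := by
        rw [hA]
        rw [if_neg]
        simp [hi0]
        omega
      have hτi : ((τ i : ℕ) : ℤ) = (n : ℤ) + (i0 : ℤ) - (i : ℤ) := by
        simp only [τ, dif_neg h, hi0]
        have := i.isLt
        push_cast
        omega
      rw [hval, hτi]
      rw [norm_mul, Complex.norm_real, mul_pow, Real.norm_eq_abs, sq_abs]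
      have h1 : (1 : ℝ) ≤ ‖r‖ ^ 2 := by
        have : (1:ℝ) ≤ ‖r‖ := hr
        nlinarith
      nlinarith [sq_nonneg (R ((n : ℤ) + (i0 : ℤ) - (i : ℤ)))]
  calc Real.sqrt (∑ k ∈ Finset.range n, R (k : ℤ) ^ 2)
      ≤ Real.sqrt (∑ i : Fin n, ‖A i i0‖ ^ 2) := Real.sqrt_le_sqrt hsum
    _ = ‖Matrix.toEuclideanCLM (𝕜 := ℂ) A v‖ := hnormimg.symm
    _ ≤ ‖Matrix.toEuclideanCLM (𝕜 := ℂ) A‖ * ‖v‖ :=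
        (Matrix.toEuclideanCLM (𝕜 := ℂ) A).le_opNorm v
    _ = ‖Matrix.toEuclideanCLM (𝕜 := ℂ) A‖ := by rw [hvnorm, mul_one]
end

section
/- Let n ≥ 1, let r be a complex number with |r| ≥ 1, and let A = A_r(R_0, R_1, …, R_{n-1}) be the r-circulant matrix on the first n terms of the generalized tribonacci sequence. Then ‖A‖₂ ≤ √[(R_0² + |r|²·∑_{k=1}^{n-1} R_k²)·(1 + ∑_{k=1}^{n-1} R_k²)]. -/
theorem aux_opnorm_le (n : ℕ) (A : Matrix (Fin n) (Fin n) ℂ) (c : ℝ) (hc : 0 ≤ c)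
    (h : ∑ i, ∑ j, ‖A i j‖ ^ 2 ≤ c ^ 2) :
    ‖Matrix.toEuclideanCLM (𝕜 := ℂ) A‖ ≤ c := by
  refine ContinuousLinearMap.opNorm_le_bound _ hc fun x => ?_
  have happ : ∀ i, (Matrix.toEuclideanCLM (𝕜 := ℂ) A x) i = ∑ j, A i j * x j := by
    intro i
    have h2 := congrFun (Matrix.ofLp_toEuclideanCLM (𝕜 := ℂ) A x) i
    simpa [Matrix.mulVec, dotProduct] using h2
  have hxsq : ‖x‖ ^ 2 = ∑ j, ‖x j‖ ^ 2 := by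
    rw [EuclideanSpace.norm_eq, Real.sq_sqrt (by positivity)]
  have key : ‖Matrix.toEuclideanCLM (𝕜 := ℂ) A x‖ ^ 2 ≤ (c * ‖x‖) ^ 2 := by
    rw [EuclideanSpace.norm_eq, Real.sq_sqrt (by positivity)]
    calc ∑ i, ‖(Matrix.toEuclideanCLM (𝕜 := ℂ) A x) i‖ ^ 2
        = ∑ i, ‖∑ j, A i j * x j‖ ^ 2 := by simp_rw [happ]
      _ ≤ ∑ i, (∑ j, ‖A i j‖ * ‖x j‖) ^ 2 := by
          refine Finset.sum_le_sum fun i _ => ?_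
          refine pow_le_pow_left₀ (norm_nonneg _) ?_ 2
          refine (norm_sum_le _ _).trans_eq ?_
          simp [norm_mul]
      _ ≤ ∑ i, (∑ j, ‖A i j‖ ^ 2) * (∑ j, ‖x j‖ ^ 2) := by
          refine Finset.sum_le_sum fun i _ => ?_
          exact Finset.sum_mul_sq_le_sq_mul_sq _ _ _
      _ = (∑ i, ∑ j, ‖A i j‖ ^ 2) * (∑ j, ‖x j‖ ^ 2) := by rw [Finset.sum_mul]
      _ ≤ c ^ 2 * (∑ j, ‖x j‖ ^ 2) := by
          refine mul_le_mul_of_nonneg_right ?_ (by positivity)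
          simpa using h
      _ = (c * ‖x‖) ^ 2 := by rw [mul_pow, hxsq]
  have h1 : 0 ≤ c * ‖x‖ := by positivity
  nlinarith [norm_nonneg (Matrix.toEuclideanCLM (𝕜 := ℂ) A x)]

/-- upper bound for the spectral norm of an `r`-circulant matrix
on the generalized tribonacci sequence, when `|r| ≥ 1`. -/
theorem rcirculant_tribonacci_specNorm_upper
    (a b c : ℤ) (ha : 0 < a) (hb : 0 < b) (hc : 0 < c)
    (R : ℤ → ℝ) (hR0 : R 0 = (a : ℝ)) (hR1 : R 1 = (b : ℝ)) (hR2 : R 2 = (c : ℝ))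
    (hrec : ∀ m : ℤ, R m = R (m - 1) + R (m - 2) + R (m - 3))
    (n : ℕ) (hn : 1 ≤ n) (r : ℂ) (hr : 1 ≤ ‖r‖)
    (A : Matrix (Fin n) (Fin n) ℂ)
    (hA : ∀ i j : Fin n, A i j =
      if (i : ℕ) ≤ (j : ℕ) then ((R ((j : ℤ) - (i : ℤ)) : ℝ) : ℂ)
      else r * ((R ((n : ℤ) + (j : ℤ) - (i : ℤ)) : ℝ) : ℂ)) :
    ‖Matrix.toEuclideanCLM (𝕜 := ℂ) A‖ ≤
      Real.sqrt ((R 0 ^ 2 +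
          ‖r‖ ^ 2 * ∑ k ∈ Finset.Icc (1 : ℤ) ((n : ℤ) - 1), R k ^ 2) *
        (1 + ∑ k ∈ Finset.Icc (1 : ℤ) ((n : ℤ) - 1), R k ^ 2)) := by
  haveI : NeZero n := ⟨by omega⟩
  -- positivity of the sequence
  have hnat : ∀ m : ℕ, 1 ≤ R (m : ℤ) := by
    intro m
    induction m using Nat.strong_induction_on with
    | _ m ih =>
      match m with
      | 0 => rw [show ((0:ℕ):ℤ) = 0 by rfl, hR0]; exact_mod_cast ha
      | 1 => rw [show ((1:ℕ):ℤ) = 1 by rfl, hR1]; exact_mod_cast hb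
      | 2 => rw [show ((2:ℕ):ℤ) = 2 by rfl, hR2]; exact_mod_cast hc
      | (m+3) =>
        have h3 := hrec ((m+3 : ℕ) : ℤ)
        have e1 : ((m+3:ℕ):ℤ) - 1 = ((m+2:ℕ):ℤ) := by push_cast; ring
        have e2 : ((m+3:ℕ):ℤ) - 2 = ((m+1:ℕ):ℤ) := by push_cast; ring
        have e3 : ((m+3:ℕ):ℤ) - 3 = ((m:ℕ):ℤ) := by push_cast; ring
        rw [e1, e2, e3] at h3
        have i1 := ih (m+2) (by omega)
        have i2 := ih (m+1) (by omega)
        have i3 := ih m (by omega)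
        linarith
  have hpos : ∀ k : ℤ, 0 ≤ k → 1 ≤ R k := by
    intro k hk
    have := hnat k.toNat
    rwa [Int.toNat_of_nonneg hk] at this
  set S : ℝ := ∑ k ∈ Finset.Icc (1 : ℤ) ((n : ℤ) - 1), R k ^ 2 with hSdef
  have hS0 : 0 ≤ S := Finset.sum_nonneg fun k _ => sq_nonneg _
  have h1r : (1:ℝ) ≤ ‖r‖ ^ 2 := by nlinarith
  -- n ≤ 1 + S
  have hcard : (Finset.Icc (1 : ℤ) ((n : ℤ) - 1)).card = n - 1 := by
    rw [Int.card_Icc]; omega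
  have hnS : (n : ℝ) ≤ 1 + S := by
    have h1 : ∀ k ∈ Finset.Icc (1 : ℤ) ((n : ℤ) - 1), (1:ℝ) ≤ R k ^ 2 := by
      intro k hk
      rw [Finset.mem_Icc] at hk
      have := hpos k (by omega)
      nlinarith
    have h2 := Finset.card_nsmul_le_sum _ _ _ h1
    rw [hcard, nsmul_eq_mul, mul_one] at h2
    have : ((n - 1 : ℕ) : ℝ) = (n : ℝ) - 1 := by
      have : (1:ℕ) ≤ n := hn
      push_cast [Nat.cast_sub this]; ring
    rw [this] at h2
    linarith
  have hfac : (0:ℝ) ≤ R 0 ^ 2 + ‖r‖ ^ 2 * S := by positivity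
  -- the dominating function on Fin n
  set hfun : Fin n → ℝ := fun k => if k = 0 then R 0 ^ 2 else ‖r‖ ^ 2 * R (k:ℤ) ^ 2
    with hfundef
  -- entrywise bound
  have hent : ∀ i j : Fin n, ‖A i j‖ ^ 2 ≤ hfun (j - i) := by
    intro i j
    have hsub : ((j - i : Fin n) : ℕ) = (n - i.val + j.val) % n := by
      rw [Fin.sub_def]
    rw [hA]
    rcases lt_trichotomy (i:ℕ) (j:ℕ) with hlt | heq | hgt
    · -- i < j
      have hv : ((j - i : Fin n) : ℕ) = j.val - i.val := by
        have hi := i.isLt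
        rw [hsub, show n - i.val + j.val = (j.val - i.val) + 1 * n by omega,
          Nat.add_mul_mod_self_right, Nat.mod_eq_of_lt (by omega)]
      have hne : (j - i : Fin n) ≠ 0 := by
        intro h0
        have := congrArg Fin.val h0
        rw [hv] at this
        simp at this
        omega
      have hcast : (((j - i : Fin n) : ℕ) : ℤ) = (j : ℤ) - (i : ℤ) := by
        rw [hv]; omega
      rw [if_pos (le_of_lt hlt), hfundef]
      simp only [hne, if_false, hcast]
      have : ‖((R ((j : ℤ) - (i : ℤ)) : ℝ) : ℂ)‖ ^ 2 = R ((j : ℤ) - (i : ℤ)) ^ 2 := by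
        rw [Complex.norm_real, Real.norm_eq_abs, sq_abs]
      rw [this]
      exact le_mul_of_one_le_left (sq_nonneg _) h1r
    · -- i = j
      have hij : i = j := Fin.ext heq
      subst hij
      have e0 : ((i : ℤ) : ℤ) - ((i : ℤ) : ℤ) = 0 := sub_self _
      rw [if_pos le_rfl]
      rw [show ((i:ℕ):ℤ) - ((i:ℕ):ℤ) = 0 from sub_self _, Complex.norm_real, Real.norm_eq_abs, sq_abs]
      simp [hfundef, sub_self]
    · -- i > j
      have hi := i.isLt
      have hv : ((j - i : Fin n) : ℕ) = n - i.val + j.val := by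
        rw [hsub, Nat.mod_eq_of_lt (by omega)]
      have hne : (j - i : Fin n) ≠ 0 := by
        intro h0
        have := congrArg Fin.val h0
        rw [hv] at this
        simp at this
        omega
      have hcast : (((j - i : Fin n) : ℕ) : ℤ) = (n : ℤ) + (j : ℤ) - (i : ℤ) := by
        rw [hv]; omega
      rw [if_neg (by omega), hfundef]
      simp only [hne, if_false, hcast]
      rw [norm_mul, mul_pow, Complex.norm_real, Real.norm_eq_abs, sq_abs]
  -- row sums
  have hsum_fin : ∑ k ∈ ({0} : Finset (Fin n))ᶜ, R ((k : Fin n) : ℤ) ^ 2 = S := by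
    rw [hSdef]
    refine Finset.sum_bij (fun (k : Fin n) _ => ((k : ℕ) : ℤ)) ?_ ?_ ?_ ?_
    · intro k hk
      simp only [Finset.mem_compl, Finset.mem_singleton] at hk
      show ((k : ℕ) : ℤ) ∈ Finset.Icc (1 : ℤ) ((n : ℤ) - 1)
      rw [Finset.mem_Icc]
      have h1 : (k : ℕ) ≠ 0 := fun h => hk (Fin.ext h)
      have h2 := k.isLt
      omega
    · intro k1 h1 k2 h2 h
      have h' : ((k1 : ℕ) : ℤ) = ((k2 : ℕ) : ℤ) := h
      exact Fin.ext (by exact_mod_cast h')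
    · intro m hm
      rw [Finset.mem_Icc] at hm
      refine ⟨⟨m.toNat, by omega⟩, ?_, ?_⟩
      · simp only [Finset.mem_compl, Finset.mem_singleton]
        intro h0
        have := congrArg Fin.val h0
        simp at this
        omega
      · show ((m.toNat : ℕ) : ℤ) = m
        omega
    · intro k hk; rfl
  have hrow : ∀ i : Fin n, ∑ j, ‖A i j‖ ^ 2 ≤ R 0 ^ 2 + ‖r‖ ^ 2 * S := by
    intro i
    calc ∑ j, ‖A i j‖ ^ 2
        ≤ ∑ j, hfun (j - i) := Finset.sum_le_sum fun j _ => hent i j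
      _ = ∑ k, hfun k := Fintype.sum_equiv (Equiv.subRight i) _ _ (fun j => rfl)
      _ = hfun 0 + ∑ k ∈ ({0} : Finset (Fin n))ᶜ, hfun k := Fintype.sum_eq_add_sum_compl 0 _
      _ = R 0 ^ 2 + ‖r‖ ^ 2 * S := by
          rw [hfundef]
          simp only [if_pos rfl]
          congr 1
          rw [← hsum_fin, Finset.mul_sum]
          refine Finset.sum_congr rfl fun k hk => ?_
          simp only [Finset.mem_compl, Finset.mem_singleton] at hk
          rw [if_neg hk]
  -- total bound
  have htotal : ∑ i, ∑ j, ‖A i j‖ ^ 2 ≤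
      (R 0 ^ 2 + ‖r‖ ^ 2 * S) * (1 + S) := by
    calc ∑ i, ∑ j, ‖A i j‖ ^ 2
        ≤ ∑ _i : Fin n, (R 0 ^ 2 + ‖r‖ ^ 2 * S) :=
          Finset.sum_le_sum fun i _ => hrow i
      _ = (n : ℝ) * (R 0 ^ 2 + ‖r‖ ^ 2 * S) := by
          rw [Finset.sum_const, Finset.card_univ, Fintype.card_fin, nsmul_eq_mul]
      _ ≤ (1 + S) * (R 0 ^ 2 + ‖r‖ ^ 2 * S) :=
          mul_le_mul_of_nonneg_right hnS hfac
      _ = (R 0 ^ 2 + ‖r‖ ^ 2 * S) * (1 + S) := mul_comm _ _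
  refine aux_opnorm_le n A _ (Real.sqrt_nonneg _) ?_
  rw [Real.sq_sqrt (by positivity)]
  exact htotal
end

section
/- Let n ≥ 1, let r be a complex number with |r| < 1, and let A = A_r(R_0, R_1, …, R_{n-1}) be the r-circulant matrix on the first n terms of the generalized tribonacci sequence. Then |r|·√(∑_{k=0}^{n-1} R_k²) ≤ ‖A‖₂ ≤ √( n·[4·R_{n-1}·R_n − 4·R_0·R_1 − (R_n − R_{n-2})² + (R_{-2} + R_0)² + 4·R_0²]/4 ). -/
private lemma trib_sum_sq_aux (R : ℤ → ℝ)
    (hrec : ∀ m : ℤ, R m = R (m - 1) + R (m - 2) + R (m - 3)) :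
    ∀ m : ℕ, 1 ≤ m → ∑ k ∈ Finset.range m, R (k : ℤ) ^ 2 =
      (4 * R ((m:ℤ)-1) * R (m:ℤ) - 4 * R 0 * R 1 - (R (m:ℤ) - R ((m:ℤ)-2))^2
        + (R (-2) + R 0)^2 + 4 * R 0 ^ 2) / 4 := by
  intro m hm
  induction m with
  | zero => omega
  | succ p ih =>
    rcases Nat.eq_zero_or_pos p with hp | hp
    · subst hp
      have h1 := hrec 1
      norm_num at h1 ⊢
      have e : R (-2) + R 0 = R 1 - R (-1) := by linarith
      rw [e]; ring
    · have ih' := ih hp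
      have hrecm := hrec ((p:ℤ) + 1)
      simp only [show (p:ℤ)+1-1 = (p:ℤ) by ring, show (p:ℤ)+1-2 = (p:ℤ)-1 by ring,
        show (p:ℤ)+1-3 = (p:ℤ)-2 by ring] at hrecm
      rw [Finset.sum_range_succ, ih']
      push_cast
      simp only [show (p:ℤ)+1-1 = (p:ℤ) by ring, show (p:ℤ)+1-2 = (p:ℤ)-1 by ring]
      rw [hrecm]; ring

/-- bounds for the spectral norm of an `r`-circulant matrix
on the generalized tribonacci sequence, when `|r| < 1`. -/
theorem rcirculant_tribonacci_specNorm_bounds_small_r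
    (a b c : ℤ) (ha : 0 < a) (hb : 0 < b) (hc : 0 < c)
    (R : ℤ → ℝ) (hR0 : R 0 = (a : ℝ)) (hR1 : R 1 = (b : ℝ)) (hR2 : R 2 = (c : ℝ))
    (hrec : ∀ m : ℤ, R m = R (m - 1) + R (m - 2) + R (m - 3))
    (n : ℕ) (hn : 1 ≤ n) (r : ℂ) (hr : ‖r‖ < 1)
    (A : Matrix (Fin n) (Fin n) ℂ)
    (hA : ∀ i j : Fin n, A i j =
      if (i : ℕ) ≤ (j : ℕ) then ((R ((j : ℤ) - (i : ℤ)) : ℝ) : ℂ)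
      else r * ((R ((n : ℤ) + (j : ℤ) - (i : ℤ)) : ℝ) : ℂ)) :
    ‖r‖ * Real.sqrt (∑ k ∈ Finset.range n, R (k : ℤ) ^ 2) ≤
        ‖Matrix.toEuclideanCLM (𝕜 := ℂ) A‖ ∧
      ‖Matrix.toEuclideanCLM (𝕜 := ℂ) A‖ ≤
        Real.sqrt ((n : ℝ) *
          ((4 * R ((n : ℤ) - 1) * R (n : ℤ) - 4 * R 0 * R 1
            - (R (n : ℤ) - R ((n : ℤ) - 2)) ^ 2 + (R (-2) + R 0) ^ 2
            + 4 * R 0 ^ 2) / 4)) := by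
  haveI : NeZero n := ⟨by omega⟩
  set T := Matrix.toEuclideanCLM (𝕜 := ℂ) A with hT
  set S := ∑ k ∈ Finset.range n, R (k : ℤ) ^ 2 with hS
  have hS0 : 0 ≤ S := Finset.sum_nonneg fun _ _ => sq_nonneg _
  have hr' : ‖r‖ < 1 := hr
  have hrabs : ‖r‖ = ‖r‖ := rfl
  have hrnn : (0:ℝ) ≤ ‖r‖ := norm_nonneg r
  have hr2 : ‖r‖ ^ 2 ≤ 1 := by nlinarith
  -- matrix application formula
  have hTx : ∀ (x : EuclideanSpace ℂ (Fin n)) (i : Fin n),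
      T x i = ∑ j, A i j * x j := by
    intro x i
    have h : T x i = (A.mulVec (fun j => x j)) i := rfl
    rw [h]; simp [Matrix.mulVec, dotProduct]
  constructor
  · -- LOWER BOUND
    set x : EuclideanSpace ℂ (Fin n) := EuclideanSpace.single 0 1 with hxdef
    have hx1 : ‖x‖ = 1 := by simp [hxdef, EuclideanSpace.norm_single]
    have hTxi : ∀ i : Fin n, T x i = A i 0 := by
      intro i
      rw [hTx]
      simp [hxdef, EuclideanSpace.single_apply, mul_ite]
    have hnormTx : ‖T x‖ = Real.sqrt (∑ i : Fin n, ‖A i 0‖ ^ 2) := by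
      rw [EuclideanSpace.norm_eq]
      congr 1
      refine Finset.sum_congr rfl fun i _ => by rw [hTxi]
    have key : ‖r‖ ^ 2 * S ≤ ∑ i : Fin n, ‖A i 0‖ ^ 2 := by
      have hre : ∑ i : Fin n, ‖A i 0‖ ^ 2 = ∑ i : Fin n, ‖A (-i) 0‖ ^ 2 :=
        (Equiv.sum_comp (Equiv.neg (Fin n)) fun i => ‖A i 0‖ ^ 2).symm
      have hls : ‖r‖ ^ 2 * S = ∑ i : Fin n, ‖r‖ ^ 2 * R ((i : ℕ) : ℤ) ^ 2 := by
        rw [hS, Finset.mul_sum, ← Fin.sum_univ_eq_sum_range (fun k => ‖r‖^2 * R (k : ℤ) ^ 2)]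
      rw [hre, hls]
      refine Finset.sum_le_sum fun i _ => ?_
      by_cases hi : i = 0
      · subst hi
        rw [hA]
        simp only [neg_zero, Fin.val_zero, le_refl, if_pos, Nat.cast_zero, sub_zero, sub_self]
        rw [Complex.norm_real, Real.norm_eq_abs, sq_abs]
        nlinarith [mul_nonneg (sub_nonneg.2 hr2) (sq_nonneg (R 0))]
      · have hiv : 0 < (i : ℕ) := Nat.pos_of_ne_zero (Fin.val_ne_zero_iff.mpr hi)
        have hnegv : ((-i : Fin n) : ℕ) = n - (i : ℕ) := by
          rw [Fin.coe_neg]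
          exact Nat.mod_eq_of_lt (by omega)
        rw [hA]
        rw [if_neg (by simp only [hnegv, Fin.val_zero]; omega)]
        have harg : (n:ℤ) + (((0:Fin n) : ℕ) : ℤ) - (((-i : Fin n) : ℕ) : ℤ) = ((i:ℕ) : ℤ) := by
          have := i.2
          simp only [hnegv, Fin.val_zero]
          omega
        rw [harg]
        rw [norm_mul, Complex.norm_real, mul_pow, Real.norm_eq_abs, sq_abs]
    have step1 : ‖r‖ * Real.sqrt S ≤ ‖T x‖ := by
      rw [hnormTx]
      have : ‖r‖ * Real.sqrt S = Real.sqrt (‖r‖ ^ 2 * S) := by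
        rw [Real.sqrt_mul (sq_nonneg _), Real.sqrt_sq hrnn]
      rw [this]
      exact Real.sqrt_le_sqrt key
    calc ‖r‖ * Real.sqrt S = ‖r‖ * Real.sqrt S := rfl
      _ ≤ ‖T x‖ := step1
      _ ≤ ‖T‖ * ‖x‖ := T.le_opNorm x
      _ = ‖T‖ := by rw [hx1, mul_one]
  · -- UPPER BOUND
    have hid := trib_sum_sq_aux R hrec n hn
    rw [← hS] at hid
    rw [← hid]
    -- row bound
    have rowbound : ∀ i : Fin n, ∑ j : Fin n, ‖A i j‖ ^ 2 ≤ S := by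
      intro i
      have hre : ∑ j : Fin n, ‖A i j‖ ^ 2 = ∑ j : Fin n, ‖A i (j + i)‖ ^ 2 :=
        (Equiv.sum_comp (Equiv.addRight i) fun j => ‖A i j‖ ^ 2).symm
      rw [hre, hS, ← Fin.sum_univ_eq_sum_range (fun k => R (k : ℤ) ^ 2)]
      refine Finset.sum_le_sum fun j _ => ?_
      have hj := j.2
      have hi2 := i.2
      by_cases hlt : (j : ℕ) + (i : ℕ) < n
      · have hval : ((j + i : Fin n) : ℕ) = (j : ℕ) + (i : ℕ) := by
          rw [Fin.val_add, Nat.mod_eq_of_lt hlt]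
        rw [hA, if_pos (by omega)]
        have harg : (((j + i : Fin n) : ℕ) : ℤ) - ((i:ℕ) : ℤ) = ((j:ℕ) : ℤ) := by
          rw [hval]; omega
        rw [harg, Complex.norm_real, Real.norm_eq_abs, sq_abs]
      · have hval : ((j + i : Fin n) : ℕ) = (j : ℕ) + (i : ℕ) - n := by
          rw [Fin.val_add, Nat.mod_eq_sub_mod (by omega)]
          exact Nat.mod_eq_of_lt (by omega)
        rw [hA, if_neg (by omega)]
        have harg : (n:ℤ) + (((j + i : Fin n) : ℕ) : ℤ) - ((i:ℕ) : ℤ) = ((j:ℕ) : ℤ) := by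
          rw [hval]; omega
        rw [harg, norm_mul, Complex.norm_real, mul_pow, Real.norm_eq_abs, sq_abs]
        nlinarith [mul_nonneg (sub_nonneg.2 hr2) (sq_nonneg (R ((j:ℕ) : ℤ)))]
    refine T.opNorm_le_bound (Real.sqrt_nonneg _) fun x => ?_
    have hx2 : ∑ j : Fin n, ‖x j‖ ^ 2 = ‖x‖ ^ 2 := by
      rw [EuclideanSpace.norm_eq, Real.sq_sqrt (Finset.sum_nonneg fun _ _ => sq_nonneg _)]
    have h1 : ∀ i : Fin n, ‖T x i‖ ^ 2 ≤ S * ‖x‖ ^ 2 := by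
      intro i
      have hai : ‖T x i‖ ≤ ∑ j, ‖A i j‖ * ‖x j‖ := by
        rw [hTx]
        refine (norm_sum_le _ _).trans (le_of_eq ?_)
        exact Finset.sum_congr rfl fun j _ => norm_mul _ _
      calc ‖T x i‖ ^ 2 ≤ (∑ j, ‖A i j‖ * ‖x j‖) ^ 2 :=
            pow_le_pow_left₀ (norm_nonneg _) hai 2
        _ ≤ (∑ j, ‖A i j‖ ^ 2) * (∑ j, ‖x j‖ ^ 2) :=
            Finset.sum_mul_sq_le_sq_mul_sq _ _ _
        _ ≤ S * ‖x‖ ^ 2 := by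
            rw [hx2]
            exact mul_le_mul_of_nonneg_right (rowbound i) (by positivity)
    have hsq : ‖T x‖ ^ 2 ≤ (n : ℝ) * S * ‖x‖ ^ 2 := by
      rw [EuclideanSpace.norm_eq, Real.sq_sqrt (Finset.sum_nonneg fun _ _ => sq_nonneg _)]
      calc ∑ i : Fin n, ‖T x i‖ ^ 2 ≤ ∑ _i : Fin n, S * ‖x‖ ^ 2 :=
            Finset.sum_le_sum fun i _ => h1 i
        _ = (n : ℝ) * S * ‖x‖ ^ 2 := by
            rw [Finset.sum_const, Finset.card_univ, Fintype.card_fin, nsmul_eq_mul]; ring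
    calc ‖T x‖ = Real.sqrt (‖T x‖ ^ 2) := (Real.sqrt_sq (norm_nonneg _)).symm
      _ ≤ Real.sqrt ((n : ℝ) * S * ‖x‖ ^ 2) := Real.sqrt_le_sqrt hsq
      _ = Real.sqrt ((n : ℝ) * S) * ‖x‖ := by
          rw [Real.sqrt_mul (by positivity), Real.sqrt_sq (norm_nonneg _)]
end

section
/- Let n ≥ 1 and let A be the n×n circulant matrix on the first n terms R_0, R_1, …, R_{n-1} of the generalized tribonacci sequence. Then ‖A‖_E = √( n·[4·R_{n-1}·R_n − 4·R_0·R_1 − (R_n − R_{n-2})² + (R_{-2} + R_0)² + 4·R_0²]/4 ). -/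
lemma trib_sumsq (R : ℤ → ℝ) (hrec : ∀ m : ℤ, R m = R (m - 1) + R (m - 2) + R (m - 3)) :
    ∀ n : ℕ, 1 ≤ n →
      ∑ k ∈ Finset.range n, R (k : ℤ) ^ 2 =
        (4 * R ((n : ℤ) - 1) * R (n : ℤ) - 4 * R 0 * R 1
          - (R (n : ℤ) - R ((n : ℤ) - 2)) ^ 2 + (R (-2) + R 0) ^ 2 + 4 * R 0 ^ 2) / 4 := by
  intro n hn
  induction n, hn using Nat.le_induction with
  | base =>
    have h := hrec 1
    norm_num at h ⊢
    have hm1 : R (-1) = R 1 - R 0 - R (-2) := by linarith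
    rw [hm1]; ring
  | succ n hn ih =>
    rw [Finset.sum_range_succ, ih]
    have h := hrec ((n : ℤ) + 1)
    have e1 : ((n : ℤ) + 1) - 1 = (n : ℤ) := by ring
    have e2 : ((n : ℤ) + 1) - 2 = (n : ℤ) - 1 := by ring
    have e3 : ((n : ℤ) + 1) - 3 = (n : ℤ) - 2 := by ring
    rw [e1, e2, e3] at h
    push_cast
    rw [e1, e2, h]
    ring

lemma trib_row_sum (n : ℕ) (hn : 1 ≤ n) (R : ℤ → ℝ) (i : Fin n) :
    ∑ j : Fin n, R (((j : ℤ) - (i : ℤ)) % (n : ℤ)) ^ 2 = ∑ k : Fin n, R ((k : ℤ)) ^ 2 := by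
  haveI : NeZero n := ⟨by omega⟩
  have h1 : ∀ j : Fin n, ((j : ℤ) - (i : ℤ)) % (n : ℤ) = ((j - i : Fin n) : ℤ) := by
    intro j
    have h2 : ((j - i : Fin n) : ℕ) = (n - (i : ℕ) + j) % n := by
      rw [Fin.sub_def]
    have h3 : (((j - i : Fin n) : ℕ) : ℤ) = ((n : ℤ) - (i : ℤ) + (j : ℤ)) % (n : ℤ) := by
      rw [h2]; push_cast [Nat.cast_sub i.isLt.le]; ring_nf
    have h4 : ((n : ℤ) - (i : ℤ) + (j : ℤ)) = ((j : ℤ) - (i : ℤ)) + (n : ℤ) * 1 := by ring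
    rw [h3, h4, Int.add_mul_emod_self_left]
  simp_rw [h1]
  exact Fintype.sum_equiv (Equiv.subRight i) _ _ (fun j => rfl)

/-- Euclidean (Frobenius) norm of the circulant matrix on the
first `n` generalized tribonacci numbers. -/
theorem circulant_tribonacci_frobNorm
    (a b c : ℤ) (ha : 0 < a) (hb : 0 < b) (hc : 0 < c)
    (R : ℤ → ℝ) (hR0 : R 0 = (a : ℝ)) (hR1 : R 1 = (b : ℝ)) (hR2 : R 2 = (c : ℝ))
    (hrec : ∀ m : ℤ, R m = R (m - 1) + R (m - 2) + R (m - 3))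
    (n : ℕ) (hn : 1 ≤ n)
    (A : Matrix (Fin n) (Fin n) ℝ)
    (hA : ∀ i j : Fin n, A i j = R (((j : ℤ) - (i : ℤ)) % (n : ℤ))) :
    Real.sqrt (∑ i : Fin n, ∑ j : Fin n, |A i j| ^ 2) =
      Real.sqrt ((n : ℝ) *
        ((4 * R ((n : ℤ) - 1) * R (n : ℤ) - 4 * R 0 * R 1
          - (R (n : ℤ) - R ((n : ℤ) - 2)) ^ 2 + (R (-2) + R 0) ^ 2
          + 4 * R 0 ^ 2) / 4)) := by
  have hsum : ∑ i : Fin n, ∑ j : Fin n, |A i j| ^ 2 =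
      (n : ℝ) * ∑ k ∈ Finset.range n, R (k : ℤ) ^ 2 := by
    have : ∀ i : Fin n, ∑ j : Fin n, |A i j| ^ 2 = ∑ k : Fin n, R ((k : ℤ)) ^ 2 := by
      intro i
      rw [← trib_row_sum n hn R i]
      refine Finset.sum_congr rfl fun j _ => ?_
      rw [hA i j, sq_abs]
    simp_rw [this]
    rw [Finset.sum_const, Finset.card_univ, Fintype.card_fin, nsmul_eq_mul,
      Fin.sum_univ_eq_sum_range (fun k => R (k : ℤ) ^ 2)]
  rw [hsum, trib_sumsq R hrec n hn]
end

section
/- Let n ≥ 1 and let A be the n×n circulant matrix on the first n terms R_0, R_1, …, R_{n-1} of the generalized tribonacci sequence. Then √([4·R_{n-1}·R_n − 4·R_0·R_1 − (R_n − R_{n-2})² + (R_{-2} + R_0)² + 4·R_0²]/4) ≤ ‖A‖₂ ≤ √[(∑_{i=0}^{n-1} R_i²)·(1 + ∑_{i=1}^{n-1} R_i²)]. -/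
private lemma emod_sub_helper (a b n : ℤ) : (a % n - b) % n = (a - b) % n := by
  conv_rhs => rw [Int.sub_emod]
  rw [Int.sub_emod, Int.emod_emod_of_dvd _ dvd_rfl]

private lemma emod_add_self_helper (a n : ℤ) : (a + n) % n = a % n := by
  simpa using Int.add_mul_emod_self_left (a := a) (b := n) (c := 1)

/-- bounds for the spectral norm of the circulant matrix on the
first `n` generalized tribonacci numbers. -/
theorem circulant_tribonacci_specNorm_bounds
    (a b c : ℤ) (ha : 0 < a) (hb : 0 < b) (hc : 0 < c)
    (R : ℤ → ℝ) (hR0 : R 0 = (a : ℝ)) (hR1 : R 1 = (b : ℝ)) (hR2 : R 2 = (c : ℝ))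
    (hrec : ∀ m : ℤ, R m = R (m - 1) + R (m - 2) + R (m - 3))
    (n : ℕ) (hn : 1 ≤ n)
    (A : Matrix (Fin n) (Fin n) ℝ)
    (hA : ∀ i j : Fin n, A i j = R (((j : ℤ) - (i : ℤ)) % (n : ℤ))) :
    Real.sqrt ((4 * R ((n : ℤ) - 1) * R (n : ℤ) - 4 * R 0 * R 1
          - (R (n : ℤ) - R ((n : ℤ) - 2)) ^ 2 + (R (-2) + R 0) ^ 2
          + 4 * R 0 ^ 2) / 4) ≤
        ‖Matrix.toEuclideanCLM (𝕜 := ℝ) A‖ ∧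
      ‖Matrix.toEuclideanCLM (𝕜 := ℝ) A‖ ≤
        Real.sqrt ((∑ i ∈ Finset.range n, R (i : ℤ) ^ 2) *
          (1 + ∑ i ∈ Finset.Icc (1 : ℤ) ((n : ℤ) - 1), R i ^ 2)) := by
  haveI : NeZero n := ⟨by omega⟩
  set T := Matrix.toEuclideanCLM (𝕜 := ℝ) A with hT
  set S := ∑ i ∈ Finset.range n, R (i : ℤ) ^ 2 with hSdef
  have hrec' : ∀ m : ℤ, R (m + 3) = R (m + 2) + R (m + 1) + R m := by
    intro m
    have h := hrec (m + 3)
    rwa [show m + 3 - 1 = m + 2 by ring, show m + 3 - 2 = m + 1 by ring,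
      show m + 3 - 3 = m by ring] at h
  -- positivity of terms
  have hpos : ∀ m : ℕ, (1 : ℝ) ≤ R m := by
    have key : ∀ m : ℕ, (1:ℝ) ≤ R m ∧ (1:ℝ) ≤ R ((m:ℤ) + 1) ∧ (1:ℝ) ≤ R ((m:ℤ) + 2) := by
      intro m
      induction m with
      | zero =>
        have ha' : (1:ℤ) ≤ a := ha
        have hb' : (1:ℤ) ≤ b := hb
        have hc' : (1:ℤ) ≤ c := hc
        norm_num [hR0, hR1, hR2]
        exact ⟨by exact_mod_cast ha', by exact_mod_cast hb', by exact_mod_cast hc'⟩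
      | succ k ih =>
        have h := hrec' (k : ℤ)
        push_cast
        refine ⟨?_, ?_, ?_⟩
        · have := ih.2.1; linarith
        · have := ih.2.2
          rw [show (k:ℤ) + 1 + 1 = (k:ℤ) + 2 by ring]; linarith
        · rw [show (k:ℤ) + 1 + 2 = (k:ℤ) + 3 by ring]
          have h1 := ih.1; have h2 := ih.2.1; have h3 := ih.2.2
          linarith
    exact fun m => (key m).1
  -- sum of squares identity
  have ident : ∀ m : ℕ, 4 * ∑ i ∈ Finset.range (m+1), R (i:ℤ) ^ 2 =
      4 * R (m:ℤ) * R ((m:ℤ)+1) - 4 * R 0 * R 1 - (R ((m:ℤ)+1) - R ((m:ℤ)-1)) ^ 2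
      + (R (-2) + R 0) ^ 2 + 4 * R 0 ^ 2 := by
    intro m
    induction m with
    | zero =>
      have h := hrec 1
      norm_num at h ⊢
      linear_combination (-(R 1 - R (-1) + R (-2) + R 0)) * h
    | succ k ih =>
      rw [Finset.sum_range_succ]
      have h := hrec' ((k:ℤ) - 1)
      rw [show (k:ℤ) - 1 + 3 = (k:ℤ) + 2 by ring, show (k:ℤ) - 1 + 2 = (k:ℤ) + 1 by ring,
        show (k:ℤ) - 1 + 1 = (k:ℤ) by ring] at h
      push_cast
      rw [show (k:ℤ) + 1 + 1 = (k:ℤ) + 2 by ring, show (k:ℤ) + 1 - 1 = (k:ℤ) by ring]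
      linear_combination ih + (R ((k:ℤ)+2) - 3*R ((k:ℤ)+1) - R (k:ℤ) + R ((k:ℤ)-1)) * h
  have hS : (4 * R ((n : ℤ) - 1) * R (n : ℤ) - 4 * R 0 * R 1
          - (R (n : ℤ) - R ((n : ℤ) - 2)) ^ 2 + (R (-2) + R 0) ^ 2
          + 4 * R 0 ^ 2) / 4 = S := by
    obtain ⟨m, rfl⟩ : ∃ m, n = m + 1 := ⟨n - 1, by omega⟩
    have h := ident m
    push_cast at h ⊢
    rw [show (m:ℤ) + 1 - 1 = (m:ℤ) by ring, show (m:ℤ) + 1 - 2 = (m:ℤ) - 1 by ring]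
    rw [hSdef]
    push_cast
    linarith [h]
  -- row sums
  have hrow : ∀ i : Fin n, ∑ j : Fin n, R (((j:ℤ) - (i:ℤ)) % (n:ℤ)) ^ 2 = S := by
    intro i
    rw [hSdef, ← Fin.sum_univ_eq_sum_range]
    rw [← Equiv.sum_comp (Equiv.addRight i) (fun j : Fin n => R (((j:ℤ) - (i:ℤ)) % (n:ℤ)) ^ 2)]
    refine Finset.sum_congr rfl fun j _ => ?_
    have hval : (((j + i : Fin n) : ℕ) : ℤ) = ((j:ℤ) + (i:ℤ)) % (n:ℤ) := by
      rw [Fin.val_add]; push_cast; ring_nf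
    show R ((((j + i : Fin n) : ℤ) - (i:ℤ)) % (n:ℤ)) ^ 2 = R ((j:ℕ):ℤ) ^ 2
    rw [hval, emod_sub_helper, show (j:ℤ) + (i:ℤ) - (i:ℤ) = (j:ℤ) by ring,
      Int.emod_eq_of_lt (by positivity) (by exact_mod_cast j.isLt)]
  -- column sum (column 0)
  have hcol : ∑ i : Fin n, R ((0 - (i:ℤ)) % (n:ℤ)) ^ 2 = S := by
    rw [hSdef, ← Fin.sum_univ_eq_sum_range]
    refine Fintype.sum_equiv (Equiv.neg (Fin n))
      (fun i : Fin n => R ((0 - (i:ℤ)) % (n:ℤ)) ^ 2) (fun j : Fin n => R ((j:ℕ):ℤ) ^ 2)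
      (fun i => ?_)
    have hval : (((-i : Fin n) : ℕ) : ℤ) = (0 - (i:ℤ)) % (n:ℤ) := by
      rw [Fin.coe_neg]
      have hle : (i:ℕ) ≤ n := le_of_lt i.isLt
      rcases Nat.eq_zero_or_pos (i:ℕ) with h0 | h0
      · simp [h0, Nat.mod_self]
      · rw [Nat.mod_eq_of_lt (by omega)]
        push_cast [hle]
        rw [← emod_add_self_helper (0 - (i:ℤ)) (n:ℤ),
          Int.emod_eq_of_lt (by omega) (by omega)]
        ring
    simp only [Equiv.neg_apply, hval]
  have hSnonneg : 0 ≤ S := by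
    rw [hSdef]; exact Finset.sum_nonneg fun i _ => sq_nonneg _
  constructor
  · -- lower bound
    rw [hS]
    have j0 : Fin n := ⟨0, hn⟩
    set x : EuclideanSpace ℝ (Fin n) := EuclideanSpace.single (⟨0, hn⟩ : Fin n) (1:ℝ) with hx
    have hnormx : ‖x‖ = 1 := by rw [hx, EuclideanSpace.norm_single]; norm_num
    have hTx : ‖T x‖ = Real.sqrt S := by
      rw [hx, ← EuclideanSpace.toLp_single, hT, Matrix.toEuclideanCLM_toLp,
        Matrix.mulVec_single, EuclideanSpace.norm_eq]
      congr 1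
      rw [← hcol]
      refine Finset.sum_congr rfl fun i _ => ?_
      simp only [PiLp.toLp_apply, mul_one, Real.norm_eq_abs, sq_abs, hA]
      norm_num [hA]
    calc Real.sqrt S = ‖T x‖ := hTx.symm
      _ ≤ ‖T‖ * ‖x‖ := T.le_opNorm x
      _ = ‖T‖ := by rw [hnormx, mul_one]
  · -- upper bound
    have hfro : ∑ i : Fin n, ∑ j : Fin n, (A i j) ^ 2 = (n : ℝ) * S := by
      have : ∀ i : Fin n, ∑ j : Fin n, (A i j) ^ 2 = S := by
        intro i
        rw [← hrow i]
        exact Finset.sum_congr rfl fun j _ => by rw [hA]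
      rw [Finset.sum_congr rfl fun i _ => this i]
      simp [Finset.card_univ, mul_comm]
    have hub : ‖T‖ ≤ Real.sqrt ((n:ℝ) * S) := by
      refine ContinuousLinearMap.opNorm_le_bound _ (Real.sqrt_nonneg _) fun x => ?_
      set y : Fin n → ℝ := WithLp.equiv 2 _ x with hy
      have hxy : x = (WithLp.equiv 2 (Fin n → ℝ)).symm y := by
        rw [hy, Equiv.symm_apply_apply]
      have hTx : T x = (WithLp.equiv 2 (Fin n → ℝ)).symm (A.mulVec y) := by
        rw [hxy, hT, WithLp.equiv_symm_apply, Matrix.toEuclideanCLM_toLp]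
      have hnx : ‖x‖ = Real.sqrt (∑ j : Fin n, (y j) ^ 2) := by
        rw [EuclideanSpace.norm_eq]
        congr 1
        exact Finset.sum_congr rfl fun j _ => by rw [Real.norm_eq_abs, sq_abs]; rfl
      have hnTx : ‖T x‖ = Real.sqrt (∑ i : Fin n, (A.mulVec y i) ^ 2) := by
        rw [hTx, EuclideanSpace.norm_eq]
        congr 1
        exact Finset.sum_congr rfl fun i _ => by
          rw [Real.norm_eq_abs, sq_abs]
          rfl
      have hCS : ∑ i : Fin n, (A.mulVec y i) ^ 2 ≤ ((n:ℝ) * S) * ∑ j : Fin n, (y j) ^ 2 := by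
        rw [← hfro, Finset.sum_mul]
        refine Finset.sum_le_sum fun i _ => ?_
        have := Finset.sum_mul_sq_le_sq_mul_sq Finset.univ (fun j => A i j) y
        simpa [Matrix.mulVec, dotProduct] using this
      rw [hnTx, hnx]
      calc Real.sqrt (∑ i : Fin n, (A.mulVec y i) ^ 2)
          ≤ Real.sqrt (((n:ℝ) * S) * ∑ j : Fin n, (y j) ^ 2) := Real.sqrt_le_sqrt hCS
        _ = Real.sqrt ((n:ℝ) * S) * Real.sqrt (∑ j : Fin n, (y j) ^ 2) := by
            rw [Real.sqrt_mul (by positivity)]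
    refine hub.trans (Real.sqrt_le_sqrt ?_)
    have hcard : (Finset.Icc (1 : ℤ) ((n : ℤ) - 1)).card = n - 1 := by
      rw [Int.card_Icc]; omega
    have hsum_ge : ((n : ℝ) - 1) ≤ ∑ i ∈ Finset.Icc (1 : ℤ) ((n : ℤ) - 1), R i ^ 2 := by
      have h1 : ∀ i ∈ Finset.Icc (1 : ℤ) ((n : ℤ) - 1), (1:ℝ) ≤ R i ^ 2 := by
        intro i hi
        rw [Finset.mem_Icc] at hi
        have : R i = R ((i.toNat : ℕ) : ℤ) := by rw [Int.toNat_of_nonneg (by omega)]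
        have h1r := hpos i.toNat
        rw [← this] at h1r
        nlinarith
      calc ((n:ℝ) - 1) = ((Finset.Icc (1 : ℤ) ((n : ℤ) - 1)).card : ℝ) • (1:ℝ) := by
            rw [hcard]; push_cast [hn]; simp
        _ ≤ ∑ i ∈ Finset.Icc (1 : ℤ) ((n : ℤ) - 1), R i ^ 2 := by
            rw [Nat.cast_smul_eq_nsmul]
            exact Finset.card_nsmul_le_sum _ _ _ h1
    have : (n:ℝ) ≤ 1 + ∑ i ∈ Finset.Icc (1 : ℤ) ((n : ℤ) - 1), R i ^ 2 := by linarith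
    calc (n:ℝ) * S = S * (n:ℝ) := by ring
      _ ≤ S * (1 + ∑ i ∈ Finset.Icc (1 : ℤ) ((n : ℤ) - 1), R i ^ 2) :=
          mul_le_mul_of_nonneg_left this hSnonneg
end

section
/- Let n ≥ 1 and let A be the n×n Hankel matrix with entries a_{ij} = R_{i+j−1} (1 ≤ i, j ≤ n) on the generalized tribonacci sequence. Then ‖A‖₁ = ‖A‖_∞ = (R_{2n+2} − R_{2n} − R_{n+2} + R_n)/2. -/
/-- the maximum column sum norm and the maximum row sum norm of
the Hankel matrix on the generalized tribonacci sequence. -/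
theorem hankel_tribonacci_l1_linf_norms
    (a b c : ℤ) (ha : 0 < a) (hb : 0 < b) (hc : 0 < c)
    (R : ℤ → ℝ) (hR0 : R 0 = (a : ℝ)) (hR1 : R 1 = (b : ℝ)) (hR2 : R 2 = (c : ℝ))
    (hrec : ∀ m : ℤ, R m = R (m - 1) + R (m - 2) + R (m - 3))
    (n : ℕ) (hn : 1 ≤ n)
    (A : Matrix (Fin n) (Fin n) ℝ)
    (hA : ∀ i j : Fin n, A i j = R ((i : ℤ) + (j : ℤ) + 1)) :
    (⨆ j : Fin n, ∑ i : Fin n, |A i j|) =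
        (R (2 * (n : ℤ) + 2) - R (2 * (n : ℤ)) - R ((n : ℤ) + 2) + R (n : ℤ)) / 2 ∧
      (⨆ i : Fin n, ∑ j : Fin n, |A i j|) =
        (R (2 * (n : ℤ) + 2) - R (2 * (n : ℤ)) - R ((n : ℤ) + 2) + R (n : ℤ)) / 2 := by
  haveI : Nonempty (Fin n) := ⟨⟨0, hn⟩⟩
  -- convenient recurrence
  have hrec' : ∀ m : ℤ, R (m + 3) = R (m + 2) + R (m + 1) + R m := by
    intro m
    have h := hrec (m + 3)
    have e1 : m + 3 - 1 = m + 2 := by ring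
    have e2 : m + 3 - 2 = m + 1 := by ring
    have e3 : m + 3 - 3 = m := by ring
    rw [e1, e2, e3] at h
    exact h
  -- positivity at nonnegative indices
  have hpos3 : ∀ m : ℕ, 0 < R m ∧ 0 < R ((m : ℤ) + 1) ∧ 0 < R ((m : ℤ) + 2) := by
    intro m
    induction m with
    | zero =>
      refine ⟨?_, ?_, ?_⟩
      · simpa [hR0] using (by exact_mod_cast ha : (0 : ℝ) < a)
      · simpa [hR1] using (by exact_mod_cast hb : (0 : ℝ) < b)
      · simpa [hR2] using (by exact_mod_cast hc : (0 : ℝ) < c)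
    | succ k ih =>
      obtain ⟨h0, h1, h2⟩ := ih
      have hk3 : 0 < R ((k : ℤ) + 3) := by
        rw [hrec' (k : ℤ)]; linarith
      refine ⟨?_, ?_, ?_⟩
      · have e : ((k + 1 : ℕ) : ℤ) = (k : ℤ) + 1 := by push_cast; ring
        rw [e]; exact h1
      · have e : ((k + 1 : ℕ) : ℤ) + 1 = (k : ℤ) + 2 := by push_cast; ring
        rw [e]; exact h2
      · have e : ((k + 1 : ℕ) : ℤ) + 2 = (k : ℤ) + 3 := by push_cast; ring
        rw [e]; exact hk3
  have hpos : ∀ m : ℕ, 0 < R m := fun m => (hpos3 m).1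
  -- monotone from index 2 on
  have hmono : ∀ p q : ℕ, p ≤ q → R ((p : ℤ) + 2) ≤ R ((q : ℤ) + 2) := by
    intro p q hpq
    induction q, hpq using Nat.le_induction with
    | base => exact le_refl _
    | succ q hq ih =>
      have hstep : R ((q : ℤ) + 2) ≤ R ((q : ℤ) + 3) := by
        rw [hrec' (q : ℤ)]
        have h0 := hpos q
        have h1 := (hpos3 q).2.1
        linarith
      have e : ((q + 1 : ℕ) : ℤ) + 2 = (q : ℤ) + 3 := by push_cast; ring
      rw [e]
      exact le_trans ih hstep
  -- gap lemma
  have hgap : ∀ k d : ℕ, 1 ≤ k → 2 ≤ d → R (k : ℤ) ≤ R ((k : ℤ) + (d : ℤ)) := by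
    intro k d hk hd
    have h1 : R (k : ℤ) ≤ R ((k : ℤ) + 2) := by
      have h := hrec' ((k : ℤ) - 1)
      have e1 : (k : ℤ) - 1 + 3 = (k : ℤ) + 2 := by ring
      have e2 : (k : ℤ) - 1 + 2 = (k : ℤ) + 1 := by ring
      have e3 : (k : ℤ) - 1 + 1 = (k : ℤ) := by ring
      rw [e1, e2, e3] at h
      have hk1 : 0 < R ((k : ℤ) + 1) := (hpos3 k).2.1
      have hkm : 0 < R ((k : ℤ) - 1) := by
        have h' := hpos (k - 1)
        have e : ((k - 1 : ℕ) : ℤ) = (k : ℤ) - 1 := by omega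
        rwa [e] at h'
      linarith
    have h2 : R ((k : ℤ) + 2) ≤ R ((k : ℤ) + (d : ℤ)) := by
      have h' := hmono k (k + d - 2) (by omega)
      have e : ((k + d - 2 : ℕ) : ℤ) + 2 = (k : ℤ) + (d : ℤ) := by omega
      rwa [e] at h'
    linarith
  -- summation identity
  have hsum : ∀ N : ℕ, ∀ j : ℤ, 2 * ∑ i ∈ Finset.range N, R ((i : ℤ) + j)
      = R ((N : ℤ) + j + 2) - R ((N : ℤ) + j) - R (j + 2) + R j := by
    intro N j
    induction N with
    | zero => simp
    | succ N ih =>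
      rw [Finset.sum_range_succ]
      have h := hrec' ((N : ℤ) + j)
      push_cast
      have e : (N : ℤ) + j + 3 = (N : ℤ) + 1 + j + 2 := by ring
      rw [e] at h
      have e2 : (N : ℤ) + j + 1 = (N : ℤ) + 1 + j := by ring
      rw [e2] at h
      linarith
  -- the column-sum value function
  set V : ℕ → ℝ := fun t =>
    R ((n : ℤ) + (t : ℤ) + 2) - R ((n : ℤ) + (t : ℤ)) - R ((t : ℤ) + 2) + R (t : ℤ) with hV
  -- column sums
  have hcol : ∀ k : Fin n, (∑ i : Fin n, R ((i : ℤ) + (k : ℤ) + 1)) = V ((k : ℕ) + 1) / 2 := by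
    intro k
    have h1 : (∑ i : Fin n, R ((i : ℤ) + (k : ℤ) + 1))
        = ∑ i ∈ Finset.range n, R ((i : ℤ) + ((k : ℤ) + 1)) := by
      rw [← Fin.sum_univ_eq_sum_range (fun m : ℕ => R ((m : ℤ) + ((k : ℤ) + 1))) n]
      apply Finset.sum_congr rfl
      intro i _
      ring_nf
    have h2 := hsum n ((k : ℤ) + 1)
    rw [h1, hV]
    push_cast
    linarith
  -- V step
  have hVstep : ∀ q : ℕ, 1 ≤ q → q + 1 ≤ n → V q ≤ V (q + 1) := by
    intro q hq hq1
    have h1 := hrec' ((n : ℤ) + (q : ℤ))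
    have h2 := hrec' (q : ℤ)
    have h3 : R (q : ℤ) ≤ R ((q : ℤ) + (n : ℤ)) := hgap q n hq (by omega)
    simp only [hV]
    push_cast
    have e : (q : ℤ) + (n : ℤ) = (n : ℤ) + (q : ℤ) := by ring
    rw [e] at h3
    have e1 : (n : ℤ) + ((q : ℤ) + 1) + 2 = (n : ℤ) + (q : ℤ) + 3 := by ring
    have e2 : (n : ℤ) + ((q : ℤ) + 1) = (n : ℤ) + (q : ℤ) + 1 := by ring
    have e3 : (q : ℤ) + 1 + 2 = (q : ℤ) + 3 := by ring
    rw [e1, e2, e3]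
    linarith
  -- V monotone up to n
  have hVmono : ∀ t : ℕ, 1 ≤ t → t ≤ n → V t ≤ V n := by
    intro t ht htn
    have key : ∀ q : ℕ, t ≤ q → q ≤ n → V t ≤ V q := by
      intro q hq
      induction q, hq using Nat.le_induction with
      | base => intro _; exact le_refl _
      | succ q hq ih =>
        intro hq1n
        have h1 := ih (by omega)
        have h2 := hVstep q (le_trans ht hq) hq1n
        linarith
    exact key n htn le_rfl
  -- absolute values drop
  have habs : ∀ i j : Fin n, |A i j| = R ((i : ℤ) + (j : ℤ) + 1) := by
    intro i j
    rw [hA i j]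
    apply abs_of_pos
    have h := hpos ((i : ℕ) + (j : ℕ) + 1)
    have e : (((i : ℕ) + (j : ℕ) + 1 : ℕ) : ℤ) = (i : ℤ) + (j : ℤ) + 1 := by push_cast; ring
    rwa [e] at h
  -- column sums with abs
  have hcolabs : ∀ j : Fin n, (∑ i : Fin n, |A i j|) = V ((j : ℕ) + 1) / 2 := by
    intro j
    rw [show (∑ i : Fin n, |A i j|) = ∑ i : Fin n, R ((i : ℤ) + (j : ℤ) + 1) from
      Finset.sum_congr rfl fun i _ => habs i j]
    exact hcol j
  -- row sums with abs
  have hrowabs : ∀ i : Fin n, (∑ j : Fin n, |A i j|) = V ((i : ℕ) + 1) / 2 := by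
    intro i
    rw [show (∑ j : Fin n, |A i j|) = ∑ j : Fin n, R ((j : ℤ) + (i : ℤ) + 1) from
      Finset.sum_congr rfl fun j _ => by rw [habs i j]; ring_nf]
    exact hcol i
  -- target value equals V n / 2
  have htarget : (R (2 * (n : ℤ) + 2) - R (2 * (n : ℤ)) - R ((n : ℤ) + 2) + R (n : ℤ)) / 2
      = V n / 2 := by
    simp only [hV]
    have e1 : 2 * (n : ℤ) + 2 = (n : ℤ) + (n : ℤ) + 2 := by ring
    have e2 : 2 * (n : ℤ) = (n : ℤ) + (n : ℤ) := by ring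
    rw [e1, e2]
  -- the last index
  have hlast : ∃ k : Fin n, (k : ℕ) + 1 = n := ⟨⟨n - 1, by omega⟩, by simp; omega⟩
  obtain ⟨k0, hk0⟩ := hlast
  have hsup : ∀ f : Fin n → ℝ, (∀ j : Fin n, f j = V ((j : ℕ) + 1) / 2) →
      (⨆ j : Fin n, f j) = V n / 2 := by
    intro f hf
    apply le_antisymm
    · apply ciSup_le
      intro j
      rw [hf j]
      have h := hVmono ((j : ℕ) + 1) (by omega) (by omega)
      exact div_le_div_of_nonneg_right h (by norm_num) |>.trans_eq rfl
    · have : V n / 2 = f k0 := by rw [hf k0, hk0]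
      rw [this]
      exact le_ciSup (Finite.bddAbove_range f) k0
  rw [htarget]
  exact ⟨hsup _ hcolabs, hsup _ hrowabs⟩
end

section
/- Let n ≥ 1, let r be a complex number with |r| ≥ 1, and let A = A_r(Z_0, Z_1, …, Z_{n-1}) be the r-circulant matrix on the first n terms of the generalized Pell–Padovan sequence. Then √(Z_{n+1}² − Z_{n-2}² − Z_{n-4}² + T) ≤ ‖A‖₂ ≤ √[(Z_0² + |r|²·∑_{k=1}^{n-1} Z_k²)·(1 + ∑_{k=1}^{n-1} Z_k²)]. -/
set_option maxHeartbeats 1000000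

private lemma algStep (A B C D E F G : ℝ) (h1 : A = E + D) (h2 : B = D + C)
    (h3 : E = C + F) (h4 : D = F + G) : A^2 - D^2 - F^2 = B^2 - C^2 - G^2 + E^2 := by
  subst h3; subst h4; subst h1; subst h2; ring

/-- bounds for the spectral norm of an `r`-circulant matrix on
the generalized Pell–Padovan sequence, when `|r| ≥ 1`. -/
theorem rcirculant_pell_padovan_specNorm_bounds_big_r
    (a b c : ℤ) (ha : 0 < a) (hb : 0 < b) (hc : 0 < c)
    (Z : ℤ → ℝ) (hZ0 : Z 0 = (a : ℝ)) (hZ1 : Z 1 = (b : ℝ)) (hZ2 : Z 2 = (c : ℝ))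
    (hrec : ∀ m : ℤ, Z m = Z (m - 2) + Z (m - 3))
    (T : ℝ) (hT : T = 2 * (a : ℝ) * ((a : ℝ) - (c : ℝ)) - ((b : ℝ) - (c : ℝ)) ^ 2)
    (n : ℕ) (hn : 1 ≤ n) (r : ℂ) (hr : 1 ≤ ‖r‖)
    (A : Matrix (Fin n) (Fin n) ℂ)
    (hA : ∀ i j : Fin n, A i j =
      if (i : ℕ) ≤ (j : ℕ) then ((Z ((j : ℤ) - (i : ℤ)) : ℝ) : ℂ)
      else r * ((Z ((n : ℤ) + (j : ℤ) - (i : ℤ)) : ℝ) : ℂ)) :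
    Real.sqrt (Z ((n : ℤ) + 1) ^ 2 - Z ((n : ℤ) - 2) ^ 2 - Z ((n : ℤ) - 4) ^ 2 + T) ≤
        ‖Matrix.toEuclideanCLM (𝕜 := ℂ) A‖ ∧
      ‖Matrix.toEuclideanCLM (𝕜 := ℂ) A‖ ≤
        Real.sqrt ((Z 0 ^ 2 +
            ‖r‖ ^ 2 * ∑ k ∈ Finset.Icc (1 : ℤ) ((n : ℤ) - 1), Z k ^ 2) *
          (1 + ∑ k ∈ Finset.Icc (1 : ℤ) ((n : ℤ) - 1), Z k ^ 2)) := by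
  haveI : NeZero n := ⟨by omega⟩
  set S := ∑ k ∈ Finset.Icc (1 : ℤ) ((n : ℤ) - 1), Z k ^ 2 with hSdef
  have hr2 : (1:ℝ) ≤ ‖r‖ ^ 2 := by nlinarith
  -- positivity of the sequence on naturals
  have hZnat : ∀ k : ℕ, 1 ≤ Z k := by
    intro k
    induction k using Nat.strong_induction_on with
    | _ k ih =>
      match k with
      | 0 => rw [Nat.cast_zero, hZ0]; exact_mod_cast ha
      | 1 => rw [Nat.cast_one, hZ1]; exact_mod_cast hb
      | 2 => rw [show ((2:ℕ):ℤ) = 2 by norm_num, hZ2]; exact_mod_cast hc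
      | (k+3) =>
        have h := hrec ((k:ℤ)+3)
        rw [show (k:ℤ)+3-2 = ((k+1 : ℕ) : ℤ) by push_cast; ring,
            show (k:ℤ)+3-3 = ((k:ℕ):ℤ) by push_cast; ring] at h
        have h1 := ih (k+1) (by omega)
        have h2 := ih k (by omega)
        have : ((k+3:ℕ):ℤ) = (k:ℤ)+3 := by push_cast; ring
        rw [this, h]; linarith
  have hZsq1 : ∀ k : ℤ, 0 ≤ k → 1 ≤ Z k ^ 2 := by
    intro k hk
    have h1 : 1 ≤ Z k := by
      have := hZnat k.toNat; rwa [Int.toNat_of_nonneg hk] at this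
    nlinarith
  have hS0 : 0 ≤ S := Finset.sum_nonneg fun k _ => sq_nonneg _
  have hScard : ((n:ℝ) - 1) ≤ S := by
    have hcard : (Finset.Icc (1:ℤ) ((n:ℤ)-1)).card = n - 1 := by
      rw [Int.card_Icc]; omega
    have h := Finset.card_nsmul_le_sum (Finset.Icc (1:ℤ) ((n:ℤ)-1)) (fun k => Z k ^ 2) 1
      (fun k hk => hZsq1 k (by simp only [Finset.mem_Icc] at hk; omega))
    rw [hcard, nsmul_eq_mul, mul_one] at h
    rw [hSdef]
    calc ((n:ℝ) - 1) = ((n - 1 : ℕ) : ℝ) := by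
          have : (1:ℕ) ≤ n := hn; push_cast [Nat.cast_sub this]; ring
      _ ≤ _ := h
  -- normalized recurrence
  have hrecn : ∀ m : ℤ, Z (m+2) = Z m + Z (m-1) := by
    intro m
    have h := hrec (m+2)
    rwa [show m+2-2 = m by ring, show m+2-3 = m-1 by ring] at h
  -- the sum-of-squares identity
  have hsum : ∀ m : ℕ, 1 ≤ m → ∑ j ∈ Finset.range m, Z j ^ 2
      = Z ((m:ℤ)+1)^2 - Z ((m:ℤ)-2)^2 - Z ((m:ℤ)-4)^2 + T + 2*((b:ℝ)-(c:ℝ))^2 := by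
    intro m hm
    induction m, hm using Nat.le_induction with
    | base =>
      have e2 : Z 2 = Z 0 + Z (-1) := by have := hrec 2; norm_num at this; exact this
      have e1 : Z 1 = Z (-1) + Z (-2) := by have := hrec 1; norm_num at this; exact this
      have e0 : Z 0 = Z (-2) + Z (-3) := by have := hrec 0; norm_num at this; exact this
      have v1 : Z (-1) = (c:ℝ) - a := by rw [hZ0] at e2; rw [hZ2] at e2; linarith
      have v2 : Z (-2) = (b:ℝ) - ((c:ℝ) - a) := by rw [hZ1] at e1; rw [v1] at e1; linarith
      have v3 : Z (-3) = (a:ℝ) - ((b:ℝ) - ((c:ℝ) - a)) := by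
        rw [hZ0] at e0; rw [v2] at e0; linarith
      rw [Finset.sum_range_one]
      norm_num
      rw [hZ0, hZ2, v1, v3, hT]; ring
    | succ m hm ih =>
      rw [Finset.sum_range_succ, ih]
      have h1 := hrecn ((m:ℤ))
      have h2 := hrecn ((m:ℤ)-1)
      have h3 := hrecn ((m:ℤ)-2)
      have h4 := hrecn ((m:ℤ)-3)
      rw [show (m:ℤ)-1+2 = (m:ℤ)+1 by ring, show (m:ℤ)-1-1 = (m:ℤ)-2 by ring] at h2
      rw [show (m:ℤ)-2+2 = (m:ℤ) by ring, show (m:ℤ)-2-1 = (m:ℤ)-3 by ring] at h3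
      rw [show (m:ℤ)-3+2 = (m:ℤ)-1 by ring, show (m:ℤ)-3-1 = (m:ℤ)-4 by ring] at h4
      rw [show ((m+1:ℕ):ℤ)+1 = (m:ℤ)+2 by push_cast; ring,
          show ((m+1:ℕ):ℤ)-2 = (m:ℤ)-1 by push_cast; ring,
          show ((m+1:ℕ):ℤ)-4 = (m:ℤ)-3 by push_cast; ring]
      have key := algStep (Z ((m:ℤ)+2)) (Z ((m:ℤ)+1)) (Z ((m:ℤ)-2)) (Z ((m:ℤ)-1))
        (Z (m:ℤ)) (Z ((m:ℤ)-3)) (Z ((m:ℤ)-4)) h1 h2 h3 h4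
      linarith
  -- bridges between sums
  have hIccR : Finset.Icc (0:ℤ) ((n:ℤ)-1)
      = Finset.map ⟨Nat.cast, Nat.cast_injective⟩ (Finset.range n) := by
    ext x
    simp only [Finset.mem_Icc, Finset.mem_map, Finset.mem_range, Function.Embedding.coeFn_mk]
    constructor
    · rintro ⟨h0, h1⟩; exact ⟨x.toNat, by omega, by omega⟩
    · rintro ⟨j, hj, rfl⟩; omega
  have hbridge : ∑ k ∈ Finset.Icc (0:ℤ) ((n:ℤ)-1), Z k ^2 = ∑ j ∈ Finset.range n, Z j ^2 := by
    rw [hIccR, Finset.sum_map]; rfl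
  have hIcc01 : Finset.Icc (0:ℤ) ((n:ℤ)-1) = insert 0 (Finset.Icc 1 ((n:ℤ)-1)) := by
    ext x
    simp only [Finset.mem_Icc, Finset.mem_insert]
    omega
  have h0notin : (0:ℤ) ∉ Finset.Icc (1:ℤ) ((n:ℤ)-1) := by
    simp
  have hsplit : ∑ k ∈ Finset.Icc (0:ℤ) ((n:ℤ)-1), Z k ^2 = Z 0 ^2 + S := by
    rw [hIcc01, Finset.sum_insert h0notin, hSdef]
  -- entrywise norms
  have hentry : ∀ i j : Fin n, ‖A i j‖^2 =
      if (i:ℕ) ≤ (j:ℕ) then Z ((j:ℤ)-(i:ℤ))^2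
      else ‖r‖^2 * Z ((n:ℤ)+(j:ℤ)-(i:ℤ))^2 := by
    intro i j
    rw [hA]
    split
    · simp [Complex.norm_real, sq_abs]
    · simp [norm_mul, mul_pow, Complex.norm_real, sq_abs]
  have hfun_nonneg : ∀ k : ℤ,
      0 ≤ (if k = 0 then Z 0 ^2 else ‖r‖ ^2 * Z k ^2) := by
    intro k; split <;> positivity
  have hhsum : ∑ k ∈ Finset.Icc (0:ℤ) ((n:ℤ)-1),
      (if k = 0 then Z 0 ^2 else ‖r‖ ^2 * Z k ^2)
      = Z 0 ^2 + ‖r‖^2 * S := by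
    rw [hIcc01, Finset.sum_insert h0notin, if_pos rfl]
    congr 1
    rw [hSdef, Finset.mul_sum]
    refine Finset.sum_congr rfl fun k hk => ?_
    rw [if_neg (by simp only [Finset.mem_Icc] at hk; omega)]
  -- row bound
  have hrow : ∀ i : Fin n, ∑ j : Fin n, ‖A i j‖^2 ≤ Z 0^2 + ‖r‖^2 * S := by
    intro i
    set σ : Fin n → ℤ := fun j => if (i:ℕ) ≤ (j:ℕ) then (j:ℤ)-(i:ℤ) else (n:ℤ)+(j:ℤ)-(i:ℤ)
      with hσ
    have hinj : ∀ j1 ∈ Finset.univ, ∀ j2 ∈ Finset.univ, σ j1 = σ j2 → j1 = j2 := by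
      intro j1 _ j2 _ h
      simp only [hσ] at h
      have t1 := j1.isLt; have t2 := j2.isLt
      apply Fin.ext
      split_ifs at h <;> omega
    have hle : ∀ j : Fin n, ‖A i j‖^2 ≤
        (if σ j = 0 then Z 0 ^2 else ‖r‖ ^2 * Z (σ j) ^2) := by
      intro j
      rw [hentry]
      by_cases hij : (i:ℕ) ≤ (j:ℕ)
      · rw [if_pos hij]
        simp only [hσ, if_pos hij]
        by_cases h0 : ((j:ℤ) - (i:ℤ)) = 0
        · rw [if_pos h0, h0]
        · rw [if_neg h0]
          nlinarith [sq_nonneg (Z ((j:ℤ)-(i:ℤ)))]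
      · rw [if_neg hij]
        simp only [hσ, if_neg hij]
        rw [if_neg (by have := i.isLt; omega)]
    have hsub : Finset.univ.image σ ⊆ Finset.Icc (0:ℤ) ((n:ℤ)-1) := by
      intro k hk
      simp only [Finset.mem_image, Finset.mem_univ, true_and] at hk
      obtain ⟨j, rfl⟩ := hk
      have t1 := j.isLt; have t2 := i.isLt
      simp only [hσ, Finset.mem_Icc]
      split <;> omega
    calc ∑ j : Fin n, ‖A i j‖^2
        ≤ ∑ j : Fin n, (if σ j = 0 then Z 0 ^2 else ‖r‖ ^2 * Z (σ j) ^2) :=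
          Finset.sum_le_sum fun j _ => hle j
      _ = ∑ k ∈ Finset.univ.image σ,
            (if k = 0 then Z 0 ^2 else ‖r‖ ^2 * Z k ^2) :=
          by rw [Finset.sum_image hinj]
      _ ≤ ∑ k ∈ Finset.Icc (0:ℤ) ((n:ℤ)-1),
            (if k = 0 then Z 0 ^2 else ‖r‖ ^2 * Z k ^2) :=
          Finset.sum_le_sum_of_subset_of_nonneg hsub (fun k _ _ => hfun_nonneg k)
      _ = Z 0^2 + ‖r‖^2 * S := hhsum
  -- upper bound
  have hCpos : (0:ℝ) ≤ Z 0^2 + ‖r‖^2 * S := by positivity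
  have hupper : ‖Matrix.toEuclideanCLM (𝕜 := ℂ) A‖ ≤
      Real.sqrt ((Z 0 ^ 2 + ‖r‖ ^ 2 * S) * (1 + S)) := by
    apply ContinuousLinearMap.opNorm_le_bound _ (Real.sqrt_nonneg _)
    intro x
    have hxsq : (0:ℝ) ≤ ∑ j : Fin n, ‖x j‖^2 := Finset.sum_nonneg fun j _ => sq_nonneg _
    have hAx : ∀ i : Fin n, ‖(Matrix.toEuclideanCLM (𝕜 := ℂ) A x) i‖^2 ≤
        (Z 0^2 + ‖r‖^2 * S) * (∑ j : Fin n, ‖x j‖^2) := by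
      intro i
      have happ : (Matrix.toEuclideanCLM (𝕜 := ℂ) A x) i = ∑ j : Fin n, A i j * x j := rfl
      rw [happ]
      calc ‖∑ j : Fin n, A i j * x j‖^2
          ≤ (∑ j : Fin n, ‖A i j‖ * ‖x j‖)^2 := by
            apply pow_le_pow_left₀ (norm_nonneg _)
            refine (norm_sum_le _ _).trans (le_of_eq ?_)
            exact Finset.sum_congr rfl fun j _ => norm_mul _ _
        _ ≤ (∑ j : Fin n, ‖A i j‖^2) * (∑ j : Fin n, ‖x j‖^2) :=
            Finset.sum_mul_sq_le_sq_mul_sq _ _ _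
        _ ≤ (Z 0^2 + ‖r‖^2 * S) * (∑ j : Fin n, ‖x j‖^2) :=
            mul_le_mul_of_nonneg_right (hrow i) hxsq
    calc ‖Matrix.toEuclideanCLM (𝕜 := ℂ) A x‖
        = Real.sqrt (∑ i : Fin n, ‖(Matrix.toEuclideanCLM (𝕜 := ℂ) A x) i‖^2) :=
          EuclideanSpace.norm_eq _
      _ ≤ Real.sqrt (∑ _i : Fin n,
            (Z 0^2 + ‖r‖^2 * S) * (∑ j : Fin n, ‖x j‖^2)) :=
          Real.sqrt_le_sqrt (Finset.sum_le_sum fun i _ => hAx i)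
      _ = Real.sqrt ((n:ℝ) * ((Z 0^2 + ‖r‖^2 * S) * (∑ j : Fin n, ‖x j‖^2))) := by
          rw [Finset.sum_const, Finset.card_univ, Fintype.card_fin, nsmul_eq_mul]
      _ ≤ Real.sqrt ((1 + S) * ((Z 0^2 + ‖r‖^2 * S) * (∑ j : Fin n, ‖x j‖^2))) := by
          apply Real.sqrt_le_sqrt
          exact mul_le_mul_of_nonneg_right (by linarith) (mul_nonneg hCpos hxsq)
      _ = Real.sqrt ((Z 0 ^ 2 + ‖r‖ ^ 2 * S) * (1 + S)) * ‖x‖ := by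
          rw [show (1 + S) * ((Z 0^2 + ‖r‖^2 * S) * (∑ j : Fin n, ‖x j‖^2))
              = ((Z 0 ^ 2 + ‖r‖ ^ 2 * S) * (1 + S)) * (∑ j : Fin n, ‖x j‖^2) by ring,
            Real.sqrt_mul (mul_nonneg hCpos (by linarith)), EuclideanSpace.norm_eq]
  -- lower bound
  have hlower : Real.sqrt (Z ((n : ℤ) + 1) ^ 2 - Z ((n : ℤ) - 2) ^ 2
      - Z ((n : ℤ) - 4) ^ 2 + T) ≤ ‖Matrix.toEuclideanCLM (𝕜 := ℂ) A‖ := by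
    set τ : Fin n → ℤ := fun i => if (i:ℕ) = 0 then 0 else (n:ℤ) - (i:ℤ) with hτ
    have hτinj : ∀ i1 ∈ Finset.univ, ∀ i2 ∈ Finset.univ, τ i1 = τ i2 → i1 = i2 := by
      intro i1 _ i2 _ h
      simp only [hτ] at h
      have t1 := i1.isLt; have t2 := i2.isLt
      apply Fin.ext
      split_ifs at h <;> omega
    have hτsub : Finset.univ.image τ ⊆ Finset.Icc (0:ℤ) ((n:ℤ)-1) := by
      intro k hk
      simp only [Finset.mem_image, Finset.mem_univ, true_and] at hk
      obtain ⟨i, rfl⟩ := hk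
      have t1 := i.isLt
      simp only [hτ, Finset.mem_Icc]
      split <;> omega
    have hτim : Finset.univ.image τ = Finset.Icc (0:ℤ) ((n:ℤ)-1) := by
      apply Finset.eq_of_subset_of_card_le hτsub
      rw [Int.card_Icc, Finset.card_image_of_injOn hτinj, Finset.card_univ, Fintype.card_fin]
      omega
    have hgsum : ∑ k ∈ Finset.Icc (0:ℤ) ((n:ℤ)-1),
        (if k = 0 then Z 0 ^2 else Z k ^2) = Z 0 ^2 + S := by
      rw [hIcc01, Finset.sum_insert h0notin, if_pos rfl]
      congr 1
      refine Finset.sum_congr rfl fun k hk => ?_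
      rw [if_neg (by simp only [Finset.mem_Icc] at hk; omega)]
    set e0 : EuclideanSpace ℂ (Fin n) := EuclideanSpace.single (0 : Fin n) 1 with he0
    have he0norm : ‖e0‖ = 1 := by simp [he0, EuclideanSpace.norm_single]
    have happ0 : ∀ i : Fin n, (Matrix.toEuclideanCLM (𝕜 := ℂ) A e0) i = A i 0 := by
      intro i
      have happ : (Matrix.toEuclideanCLM (𝕜 := ℂ) A e0) i = ∑ j : Fin n, A i j * e0 j := rfl
      rw [happ]
      simp [he0, EuclideanSpace.single_apply]
    have hgle : ∀ i : Fin n, (if τ i = 0 then Z 0 ^2 else Z (τ i) ^2) ≤ ‖A i 0‖^2 := by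
      intro i
      have hi := i.isLt
      rw [hentry i 0]
      by_cases h0 : (i:ℕ) = 0
      · have hij : (i:ℕ) ≤ ((0:Fin n):ℕ) := by rw [h0]; exact Nat.zero_le _
        rw [if_pos hij]
        have hi0 : i = 0 := Fin.ext h0
        subst hi0
        simp [hτ]
      · have hij : ¬ ((i:ℕ) ≤ ((0:Fin n):ℕ)) := by rw [Fin.val_zero]; omega
        rw [if_neg hij]
        simp only [hτ, if_neg h0]
        rw [if_neg (by omega)]
        have hidx : (n:ℤ) + ((0:Fin n):ℤ) - (i:ℤ) = (n:ℤ) - (i:ℤ) := by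
          simp [Fin.val_zero]
        rw [hidx]
        nlinarith [sq_nonneg (Z ((n:ℤ) - (i:ℤ)))]
    have hlow2 : Z 0^2 + S ≤ ‖Matrix.toEuclideanCLM (𝕜 := ℂ) A e0‖^2 := by
      have hnorm2 : ‖Matrix.toEuclideanCLM (𝕜 := ℂ) A e0‖^2
          = ∑ i : Fin n, ‖(Matrix.toEuclideanCLM (𝕜 := ℂ) A e0) i‖^2 := by
        rw [EuclideanSpace.norm_eq, Real.sq_sqrt (Finset.sum_nonneg fun i _ => sq_nonneg _)]
      rw [hnorm2]
      calc Z 0^2 + S = ∑ k ∈ Finset.Icc (0:ℤ) ((n:ℤ)-1),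
            (if k = 0 then Z 0 ^2 else Z k ^2) := hgsum.symm
        _ = ∑ i : Fin n, (if τ i = 0 then Z 0 ^2 else Z (τ i) ^2) := by
            rw [← hτim, Finset.sum_image hτinj]
        _ ≤ ∑ i : Fin n, ‖A i 0‖^2 := Finset.sum_le_sum fun i _ => hgle i
        _ = ∑ i : Fin n, ‖(Matrix.toEuclideanCLM (𝕜 := ℂ) A e0) i‖^2 := by
            refine Finset.sum_congr rfl fun i _ => ?_
            rw [happ0]
    have hE : Z ((n : ℤ) + 1) ^ 2 - Z ((n : ℤ) - 2) ^ 2 - Z ((n : ℤ) - 4) ^ 2 + T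
        ≤ Z 0^2 + S := by
      have h1 := hsum n hn
      have h2 : ∑ j ∈ Finset.range n, Z j ^2 = Z 0^2 + S := by rw [← hbridge, hsplit]
      nlinarith [sq_nonneg ((b:ℝ) - (c:ℝ))]
    have h3 : ‖Matrix.toEuclideanCLM (𝕜 := ℂ) A e0‖ ≤ ‖Matrix.toEuclideanCLM (𝕜 := ℂ) A‖ :=
      ContinuousLinearMap.unit_le_opNorm _ _ (le_of_eq he0norm)
    have h4 : Z ((n : ℤ) + 1) ^ 2 - Z ((n : ℤ) - 2) ^ 2 - Z ((n : ℤ) - 4) ^ 2 + T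
        ≤ ‖Matrix.toEuclideanCLM (𝕜 := ℂ) A‖^2 := by
      have := pow_le_pow_left₀ (norm_nonneg _) h3 2
      linarith
    calc Real.sqrt (Z ((n : ℤ) + 1) ^ 2 - Z ((n : ℤ) - 2) ^ 2 - Z ((n : ℤ) - 4) ^ 2 + T)
        ≤ Real.sqrt (‖Matrix.toEuclideanCLM (𝕜 := ℂ) A‖^2) := Real.sqrt_le_sqrt h4
      _ = ‖Matrix.toEuclideanCLM (𝕜 := ℂ) A‖ := Real.sqrt_sq (norm_nonneg _)
  exact ⟨hlower, hupper⟩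
end

section
/- Let n ≥ 1 and let A be the n×n Hankel matrix with entries a_{ij} = Z_{i+j−1} (1 ≤ i, j ≤ n) on the generalized Pell–Padovan sequence. Then ‖A‖₁ = ‖A‖_∞ = Z_{2n+4} − Z_{n+4}. -/
/-- the maximum column sum norm and the maximum row sum norm of
the Hankel matrix on the generalized Pell–Padovan sequence. -/
theorem hankel_pell_padovan_l1_linf_norms
    (a b c : ℤ) (ha : 0 < a) (hb : 0 < b) (hc : 0 < c)
    (Z : ℤ → ℝ) (hZ0 : Z 0 = (a : ℝ)) (hZ1 : Z 1 = (b : ℝ)) (hZ2 : Z 2 = (c : ℝ))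
    (hrec : ∀ m : ℤ, Z m = Z (m - 2) + Z (m - 3))
    (n : ℕ) (hn : 1 ≤ n)
    (A : Matrix (Fin n) (Fin n) ℝ)
    (hA : ∀ i j : Fin n, A i j = Z ((i : ℤ) + (j : ℤ) + 1)) :
    (⨆ j : Fin n, ∑ i : Fin n, |A i j|) = Z (2 * (n : ℤ) + 4) - Z ((n : ℤ) + 4) ∧
      (⨆ i : Fin n, ∑ j : Fin n, |A i j|) = Z (2 * (n : ℤ) + 4) - Z ((n : ℤ) + 4) := by
  -- forward recurrence
  have hrec' : ∀ m : ℤ, Z (m + 3) = Z (m + 1) + Z m := by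
    intro m
    have h := hrec (m + 3)
    have e1 : m + 3 - 2 = m + 1 := by ring
    have e2 : m + 3 - 3 = m := by ring
    rw [e1, e2] at h
    exact h
  -- nat-indexed recurrence
  have hWrec : ∀ m : ℕ, Z ((m + 3 : ℕ) : ℤ) = Z ((m + 1 : ℕ) : ℤ) + Z ((m : ℕ) : ℤ) := by
    intro m
    have h := hrec' (m : ℤ)
    push_cast
    exact h
  -- positivity
  have hWpos : ∀ k : ℕ, 0 < Z ((k : ℕ) : ℤ) := by
    intro k
    induction k using Nat.strong_induction_on with
    | _ k ih =>
      match k with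
      | 0 => simpa [hZ0] using ha
      | 1 => simpa [hZ1] using hb
      | 2 => simpa [hZ2] using hc
      | (m + 3) =>
        have h1 := ih (m + 1) (by omega)
        have h0 := ih m (by omega)
        rw [hWrec m]
        linarith
  -- telescoping step
  have hWstep : ∀ m : ℕ, Z ((m + 5 : ℕ) : ℤ) - Z ((m + 4 : ℕ) : ℤ) = Z ((m : ℕ) : ℤ) := by
    intro m
    have h5 : Z ((m + 5 : ℕ) : ℤ) = Z ((m + 3 : ℕ) : ℤ) + Z ((m + 2 : ℕ) : ℤ) := by
      have := hWrec (m + 2)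
      rw [show m + 2 + 3 = m + 5 from by omega, show m + 2 + 1 = m + 3 from by omega] at this
      exact this
    have h4 : Z ((m + 4 : ℕ) : ℤ) = Z ((m + 2 : ℕ) : ℤ) + Z ((m + 1 : ℕ) : ℤ) := by
      have := hWrec (m + 1)
      rw [show m + 1 + 3 = m + 4 from by omega, show m + 1 + 1 = m + 2 from by omega] at this
      exact this
    have h3 := hWrec m
    linarith
  -- monotonicity with step 2 (from index 1 on)
  have hW2 : ∀ m : ℕ, 1 ≤ m → Z ((m : ℕ) : ℤ) ≤ Z ((m + 2 : ℕ) : ℤ) := by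
    intro m hm
    obtain ⟨k, rfl⟩ : ∃ k, m = k + 1 := ⟨m - 1, by omega⟩
    have h := hWrec k
    rw [show k + 1 + 2 = k + 3 from by omega, h]
    have := hWpos k
    linarith
  have hW3 : ∀ m : ℕ, Z ((m : ℕ) : ℤ) ≤ Z ((m + 3 : ℕ) : ℤ) := by
    intro m
    rw [hWrec m]
    have := hWpos (m + 1)
    linarith
  -- general monotonicity for gaps ≥ 2
  have hWmono : ∀ d k : ℕ, 1 ≤ k → 2 ≤ d → Z ((k : ℕ) : ℤ) ≤ Z ((k + d : ℕ) : ℤ) := by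
    intro d
    induction d using Nat.strong_induction_on with
    | _ d ih =>
      intro k hk hd
      match d, hd with
      | 2, _ => exact hW2 k hk
      | 3, _ => exact hW3 k
      | (d + 4), _ =>
        calc Z ((k : ℕ) : ℤ) ≤ Z ((k + (d + 2) : ℕ) : ℤ) := ih (d + 2) (by omega) k hk (by omega)
          _ ≤ Z ((k + (d + 2) + 2 : ℕ) : ℤ) := hW2 _ (by omega)
          _ = Z ((k + (d + 4) : ℕ) : ℤ) := by rw [show k + (d + 2) + 2 = k + (d + 4) from by omega]
  -- telescoping sum
  have hsum : ∀ j : ℕ, ∑ i ∈ Finset.range n, Z ((i + j + 1 : ℕ) : ℤ)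
      = Z ((n + j + 5 : ℕ) : ℤ) - Z ((j + 5 : ℕ) : ℤ) := by
    intro j
    have hterm : ∀ i ∈ Finset.range n,
        Z ((i + j + 1 : ℕ) : ℤ)
          = (fun i : ℕ => Z ((i + j + 5 : ℕ) : ℤ)) (i + 1) - (fun i : ℕ => Z ((i + j + 5 : ℕ) : ℤ)) i := by
      intro i _
      have h := hWstep (i + j + 1)
      simp only
      rw [show i + j + 1 + 5 = i + 1 + j + 5 from by omega,
        show i + j + 1 + 4 = i + j + 5 from by omega] at h
      linarith
    rw [Finset.sum_congr rfl hterm, Finset.sum_range_sub (fun i : ℕ => Z ((i + j + 5 : ℕ) : ℤ)) n]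
    rw [show 0 + j + 5 = j + 5 from by omega]
  -- the column/row sum function
  set F : ℕ → ℝ := fun j => Z ((n + j + 5 : ℕ) : ℤ) - Z ((j + 5 : ℕ) : ℤ) with hF
  have hFmax : ∀ k : Fin n, F (k : ℕ) ≤ F (n - 1) := by
    intro k
    rcases lt_or_ge n 2 with h2 | h2
    · have hk : (k : ℕ) = n - 1 := by omega
      rw [hk]
    · have hstep : ∀ j : ℕ, F j ≤ F (j + 1) := by
        intro j
        have h1 := hWstep (n + j + 1)
        rw [show n + j + 1 + 5 = n + (j + 1) + 5 from by omega,
          show n + j + 1 + 4 = n + j + 5 from by omega] at h1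
        have h2' := hWstep (j + 1)
        rw [show j + 1 + 4 = j + 5 from by omega] at h2'
        have h3 := hWmono n (j + 1) (by omega) h2
        rw [show j + 1 + n = n + j + 1 from by omega] at h3
        simp only [hF]
        linarith
      have hmono : Monotone F := monotone_nat_of_le_succ hstep
      exact hmono (by omega : (k : ℕ) ≤ n - 1)
  have hFtop : F (n - 1) = Z (2 * (n : ℤ) + 4) - Z ((n : ℤ) + 4) := by
    simp only [hF]
    rw [show n + (n - 1) + 5 = 2 * n + 4 from by omega, show (n - 1) + 5 = n + 4 from by omega]
    push_cast
    ring_nf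
  have hNE : Nonempty (Fin n) := ⟨⟨0, hn⟩⟩
  have hlast : ((⟨n - 1, by omega⟩ : Fin n) : ℕ) = n - 1 := rfl
  -- column sums
  have hcol : ∀ j : Fin n, ∑ i : Fin n, |A i j| = F (j : ℕ) := by
    intro j
    have habs : ∀ i : Fin n, |A i j| = Z (((i : ℕ) + (j : ℕ) + 1 : ℕ) : ℤ) := by
      intro i
      rw [hA]
      have e : ((i : ℤ) + (j : ℤ) + 1) = (((i : ℕ) + (j : ℕ) + 1 : ℕ) : ℤ) := by push_cast; ring
      rw [e]
      exact abs_of_pos (hWpos _)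
    simp_rw [habs]
    rw [Fin.sum_univ_eq_sum_range (fun i : ℕ => Z ((i + (j : ℕ) + 1 : ℕ) : ℤ)) n]
    exact hsum (j : ℕ)
  -- row sums
  have hrow : ∀ i : Fin n, ∑ j : Fin n, |A i j| = F (i : ℕ) := by
    intro i
    have habs : ∀ j : Fin n, |A i j| = Z (((j : ℕ) + (i : ℕ) + 1 : ℕ) : ℤ) := by
      intro j
      rw [hA]
      have e : ((i : ℤ) + (j : ℤ) + 1) = (((j : ℕ) + (i : ℕ) + 1 : ℕ) : ℤ) := by push_cast; ring
      rw [e]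
      exact abs_of_pos (hWpos _)
    simp_rw [habs]
    rw [Fin.sum_univ_eq_sum_range (fun j : ℕ => Z ((j + (i : ℕ) + 1 : ℕ) : ℤ)) n]
    exact hsum (i : ℕ)
  constructor
  · apply le_antisymm
    · apply ciSup_le
      intro j
      rw [hcol j, ← hFtop]
      exact hFmax j
    · have h := le_ciSup (f := fun j : Fin n => ∑ i : Fin n, |A i j|)
        (Set.Finite.bddAbove (Set.finite_range _)) (⟨n - 1, by omega⟩ : Fin n)
      rw [hcol, hlast, hFtop] at h
      exact h
  · apply le_antisymm
    · apply ciSup_le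
      intro i
      rw [hrow i, ← hFtop]
      exact hFmax i
    · have h := le_ciSup (f := fun i : Fin n => ∑ j : Fin n, |A i j|)
        (Set.Finite.bddAbove (Set.finite_range _)) (⟨n - 1, by omega⟩ : Fin n)
      rw [hrow, hlast, hFtop] at h
      exact h
end
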